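/- arXiv:2605.30535 — 6 statements merged into one kernel-verified Lean document; each statement's English description precedes it below -/
import Mathlib

section
/- Let p be a prime number and let B = ⟨a, s | sas⁻¹ = aᵖ⟩ be the solvable Baumslag–Solitar group BS(1,p). Let T ⊆ B be the set consisting of the elements s⁻ⁱ aʲ sᵏ for i, k > 0, 0 ≤ j < pⁱ with p ∤ j; the elements sᵏ for k ≥ 0; and the elements s⁻ⁱ aʲ for i ≥ 0 and 0 ≤ j < pⁱ. Then T is a right transversal of the cyclic subgroup ⟨a⟩ in B: every element of B lies in the right coset ⟨a⟩w for exactly one w ∈ T, and distinct parameter choices in the description of T yield elements lying in distinct right cosets of ⟨a⟩. -/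
/-- Generators of the Baumslag–Solitar group `BS(1,p) = ⟨a, s | s a s⁻¹ = aᵖ⟩`. -/
inductive Gen
  | a | s

/-- Defining relator of `BS(1,p) = ⟨a, s | s a s⁻¹ = aᵖ⟩`. -/
def bsRels (p : ℕ) : Set (FreeGroup Gen) :=
  { FreeGroup.of Gen.s * FreeGroup.of Gen.a * (FreeGroup.of Gen.s)⁻¹ *
      ((FreeGroup.of Gen.a) ^ p)⁻¹ }

/-- The generator `a` of `BS(1,p)`. -/
def aBS (p : ℕ) : PresentedGroup (bsRels p) := PresentedGroup.of Gen.a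

/-- The generator `s` of `BS(1,p)`. -/
def sBS (p : ℕ) : PresentedGroup (bsRels p) := PresentedGroup.of Gen.s

/-- The set `T`: elements `s⁻ⁱ aʲ sᵏ` with `i, k > 0`, `0 ≤ j < pⁱ`, `p ∤ j`;
elements `sᵏ` with `k ≥ 0`; and elements `s⁻ⁱ aʲ` with `i ≥ 0`, `0 ≤ j < pⁱ`. -/
def TBS (p : ℕ) : Set (PresentedGroup (bsRels p)) :=
  { w | ∃ i k j : ℕ, 0 < i ∧ 0 < k ∧ j < p ^ i ∧ ¬ p ∣ j ∧
      w = (sBS p ^ i)⁻¹ * aBS p ^ j * sBS p ^ k } ∪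
  { w | ∃ k : ℕ, w = sBS p ^ k } ∪
  { w | ∃ i j : ℕ, j < p ^ i ∧ w = (sBS p ^ i)⁻¹ * aBS p ^ j }


set_option linter.unusedSectionVars false

/-- Concrete model: `ℚ ⋊ ℤ` with `n` acting by multiplication by `p^n`. -/
@[ext] structure GBS (p : ℕ) where
  q : ℚ
  n : ℤ

namespace GBS

variable {p : ℕ} [NeZero p]

lemma pQ_ne_zero (p : ℕ) [NeZero p] : (p : ℚ) ≠ 0 := Nat.cast_ne_zero.mpr (NeZero.ne p)

instance : Group (GBS p) where
  mul x y := ⟨x.q + (p : ℚ) ^ x.n * y.q, x.n + y.n⟩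
  one := ⟨0, 0⟩
  inv x := ⟨-((p : ℚ) ^ (-x.n) * x.q), -x.n⟩
  mul_assoc a b c := by
    show (⟨(a.q + _ * b.q) + (p:ℚ) ^ (a.n + b.n) * c.q, (a.n + b.n) + c.n⟩ : GBS p) = _
    ext
    · show (a.q + _ * b.q) + _ * c.q = a.q + _ * (b.q + _ * c.q)
      rw [zpow_add₀ (pQ_ne_zero p)]; ring
    · show (a.n + b.n) + c.n = a.n + (b.n + c.n); ring
  one_mul a := by
    ext
    · show (0:ℚ) + (p:ℚ) ^ (0:ℤ) * a.q = a.q; simp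
    · show 0 + a.n = a.n; simp
  mul_one a := by
    ext
    · show a.q + (p:ℚ) ^ a.n * 0 = a.q; simp
    · show a.n + 0 = a.n; simp
  inv_mul_cancel a := by
    ext
    · show -((p:ℚ) ^ (-a.n) * a.q) + (p:ℚ) ^ (-a.n) * a.q = 0; ring
    · show -a.n + a.n = 0; ring

lemma mul_def (x y : GBS p) : x * y = ⟨x.q + (p : ℚ) ^ x.n * y.q, x.n + y.n⟩ := rfl
lemma one_def : (1 : GBS p) = ⟨0, 0⟩ := rfl
lemma inv_def (x : GBS p) : x⁻¹ = ⟨-((p : ℚ) ^ (-x.n) * x.q), -x.n⟩ := rfl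

lemma aG_pow (j : ℕ) : (⟨1, 0⟩ : GBS p) ^ j = ⟨j, 0⟩ := by
  induction j with
  | zero => simp [one_def]
  | succ n ih => rw [pow_succ, ih, mul_def]; simp

lemma sG_pow (j : ℕ) : (⟨0, 1⟩ : GBS p) ^ j = ⟨0, j⟩ := by
  induction j with
  | zero => simp [one_def]
  | succ n ih => rw [pow_succ, ih, mul_def]; simp

lemma aG_zpow (m : ℤ) : (⟨1, 0⟩ : GBS p) ^ m = ⟨m, 0⟩ := by
  induction m using Int.induction_on with
  | zero => simp [one_def]
  | succ n ih => rw [zpow_add_one, ih, mul_def]; simp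
  | pred n ih => rw [zpow_sub_one, ih, inv_def, mul_def]; simp; ring

end GBS

def genImg (p : ℕ) [NeZero p] : Gen → GBS p
  | .a => ⟨1, 0⟩
  | .s => ⟨0, 1⟩

@[simp] lemma genImg_a (p : ℕ) [NeZero p] : genImg p Gen.a = ⟨1, 0⟩ := rfl
@[simp] lemma genImg_s (p : ℕ) [NeZero p] : genImg p Gen.s = ⟨0, 1⟩ := rfl

lemma genImg_rels (p : ℕ) [NeZero p] :
    ∀ r ∈ bsRels p, FreeGroup.lift (genImg p) r = 1 := by
  rintro r rfl
  simp only [map_mul, map_inv, map_pow, FreeGroup.lift_apply_of, genImg_a, genImg_s]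
  rw [GBS.aG_pow, GBS.inv_def, GBS.inv_def, GBS.mul_def, GBS.mul_def, GBS.mul_def]
  simp only [GBS.one_def]
  ext
  · simp only [show (-(1+(0:ℤ))) = -1 by ring, zpow_neg, zpow_one]
    field_simp
    norm_num
  · simp

def phiBS (p : ℕ) [NeZero p] : PresentedGroup (bsRels p) →* GBS p :=
  PresentedGroup.toGroup (genImg_rels p)

@[simp] lemma phi_a (p : ℕ) [NeZero p] : phiBS p (aBS p) = ⟨1, 0⟩ :=
  PresentedGroup.toGroup.of _

@[simp] lemma phi_s (p : ℕ) [NeZero p] : phiBS p (sBS p) = ⟨0, 1⟩ :=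
  PresentedGroup.toGroup.of _

section Brel

variable (p : ℕ)

lemma bs_rel : sBS p * aBS p * (sBS p)⁻¹ = aBS p ^ p := by
  have h1 : PresentedGroup.mk (bsRels p) (FreeGroup.of Gen.s * FreeGroup.of Gen.a *
      (FreeGroup.of Gen.s)⁻¹ * ((FreeGroup.of Gen.a) ^ p)⁻¹) = 1 :=
    (QuotientGroup.eq_one_iff _).mpr (Subgroup.subset_normalClosure rfl)
  simp only [map_mul, map_inv, map_pow] at h1
  rw [mul_inv_eq_one] at h1
  exact h1

lemma s_conj_zpow (n : ℤ) : sBS p * (aBS p) ^ n * (sBS p)⁻¹ = (aBS p) ^ ((p : ℤ) * n) :=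
  calc sBS p * (aBS p) ^ n * (sBS p)⁻¹ = (sBS p * aBS p * (sBS p)⁻¹) ^ n := conj_zpow.symm
    _ = ((aBS p) ^ p) ^ n := by rw [bs_rel]
    _ = (aBS p) ^ ((p : ℤ) * n) := by rw [← zpow_natCast, ← zpow_mul]

lemma s_mul_zpow (n : ℤ) : sBS p * (aBS p) ^ n = (aBS p) ^ ((p : ℤ) * n) * sBS p := by
  rw [← s_conj_zpow]; group

lemma sk_mul_zpow (k : ℕ) (n : ℤ) :
    sBS p ^ k * (aBS p) ^ n = (aBS p) ^ ((p : ℤ) ^ k * n) * sBS p ^ k := by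
  induction k generalizing n with
  | zero => simp
  | succ k ih =>
    calc sBS p ^ (k+1) * (aBS p) ^ n = sBS p ^ k * (sBS p * (aBS p) ^ n) := by
          rw [pow_succ, mul_assoc]
      _ = sBS p ^ k * ((aBS p) ^ ((p:ℤ) * n) * sBS p) := by rw [s_mul_zpow]
      _ = (sBS p ^ k * (aBS p) ^ ((p:ℤ) * n)) * sBS p := by rw [mul_assoc]
      _ = ((aBS p) ^ ((p:ℤ)^k * ((p:ℤ) * n)) * sBS p ^ k) * sBS p := by rw [ih]
      _ = (aBS p) ^ ((p:ℤ)^(k+1) * n) * sBS p ^ (k+1) := by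
          rw [mul_assoc, ← pow_succ]; ring_nf

lemma sk_inv_mul (k : ℕ) (n : ℤ) :
    (sBS p ^ k)⁻¹ * (aBS p) ^ ((p : ℤ) ^ k * n) = (aBS p) ^ n * (sBS p ^ k)⁻¹ := by
  have h := sk_mul_zpow p k n
  calc (sBS p ^ k)⁻¹ * (aBS p) ^ ((p:ℤ)^k * n)
      = (sBS p ^ k)⁻¹ * ((aBS p) ^ ((p:ℤ)^k * n) * sBS p ^ k) * (sBS p ^ k)⁻¹ := by group
    _ = (sBS p ^ k)⁻¹ * (sBS p ^ k * (aBS p) ^ n) * (sBS p ^ k)⁻¹ := by rw [← h]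
    _ = (aBS p) ^ n * (sBS p ^ k)⁻¹ := by group

/-- `(s^i)⁻¹ * a^J = a^m * ((s^i)⁻¹ * a^r)` when `J = p^i * m + r`. -/
lemma split_lemma (i : ℕ) (J m r : ℤ) (h : J = (p : ℤ) ^ i * m + r) :
    (sBS p ^ i)⁻¹ * (aBS p) ^ J = (aBS p) ^ m * ((sBS p ^ i)⁻¹ * (aBS p) ^ r) := by
  rw [h, zpow_add, ← mul_assoc, sk_inv_mul, mul_assoc]

end Brel

section Step

variable {p : ℕ}

lemma memA {i k j : ℕ} (hi : 0 < i) (hk : 0 < k) (hj : j < p ^ i) (hpj : ¬ p ∣ j) :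
    (sBS p ^ i)⁻¹ * aBS p ^ j * sBS p ^ k ∈ TBS p :=
  Or.inl (Or.inl ⟨i, k, j, hi, hk, hj, hpj, rfl⟩)

lemma memB (k : ℕ) : sBS p ^ k ∈ TBS p := Or.inl (Or.inr ⟨k, rfl⟩)

lemma memC {i j : ℕ} (hj : j < p ^ i) : (sBS p ^ i)⁻¹ * aBS p ^ j ∈ TBS p :=
  Or.inr ⟨i, j, hj, rfl⟩

lemma stepC (hp : 0 < p) {i j : ℕ} (hj : j < p ^ i) (x : PresentedGroup (bsRels p))
    (hx : x = aBS p ∨ x = (aBS p)⁻¹ ∨ x = sBS p ∨ x = (sBS p)⁻¹) :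
    ∃ m : ℤ, ∃ w' ∈ TBS p, ((sBS p ^ i)⁻¹ * aBS p ^ j) * x = aBS p ^ m * w' := by
  obtain rfl | rfl | rfl | rfl := hx
  · -- multiply by a
    rcases eq_or_lt_of_le (Nat.succ_le_of_lt hj) with h | h
    · -- j + 1 = p ^ i
      refine ⟨1, (sBS p ^ i)⁻¹ * aBS p ^ 0, memC (pow_pos hp i), ?_⟩
      have hJ : ((j:ℤ) + 1) = (p : ℤ) ^ i * 1 + 0 := by
        have : ((j:ℕ) + 1 : ℤ) = ((p ^ i : ℕ) : ℤ) := by exact_mod_cast congrArg (Nat.cast : ℕ → ℤ) h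
        push_cast at this ⊢; linarith
      calc ((sBS p ^ i)⁻¹ * aBS p ^ j) * aBS p
          = (sBS p ^ i)⁻¹ * (aBS p ^ (j : ℤ) * aBS p ^ (1:ℤ)) := by
            rw [zpow_natCast, zpow_one, mul_assoc]
        _ = (sBS p ^ i)⁻¹ * aBS p ^ ((j : ℤ) + 1) := by rw [← zpow_add]
        _ = aBS p ^ (1:ℤ) * ((sBS p ^ i)⁻¹ * aBS p ^ (0:ℤ)) := split_lemma p i _ 1 0 hJ
        _ = aBS p ^ (1:ℤ) * ((sBS p ^ i)⁻¹ * aBS p ^ (0:ℕ)) := by norm_num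
    · -- j + 1 < p ^ i
      exact ⟨0, (sBS p ^ i)⁻¹ * aBS p ^ (j+1), memC h, by
        rw [zpow_zero, one_mul, mul_assoc, ← pow_succ]⟩
  · -- multiply by a⁻¹
    rcases Nat.eq_zero_or_pos j with rfl | hjpos
    · refine ⟨-1, (sBS p ^ i)⁻¹ * aBS p ^ (p ^ i - 1), memC (Nat.sub_lt (pow_pos hp i) one_pos), ?_⟩
      have hJ : (-1 : ℤ) = (p : ℤ) ^ i * (-1) + ((p ^ i - 1 : ℕ) : ℤ) := by
        have h1 : (1:ℕ) ≤ p ^ i := Nat.one_le_iff_ne_zero.mpr (pow_pos hp i).ne'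
        push_cast [h1]; ring
      calc ((sBS p ^ i)⁻¹ * aBS p ^ 0) * (aBS p)⁻¹
          = (sBS p ^ i)⁻¹ * aBS p ^ (-1 : ℤ) := by rw [pow_zero, mul_one, zpow_neg, zpow_one]
        _ = aBS p ^ (-1:ℤ) * ((sBS p ^ i)⁻¹ * aBS p ^ (((p ^ i - 1 : ℕ)) : ℤ)) :=
            split_lemma p i _ _ _ hJ
        _ = aBS p ^ (-1:ℤ) * ((sBS p ^ i)⁻¹ * aBS p ^ (p ^ i - 1 : ℕ)) := by rw [zpow_natCast]
    · refine ⟨0, (sBS p ^ i)⁻¹ * aBS p ^ (j - 1), memC (by omega), ?_⟩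
      rw [zpow_zero, one_mul, mul_assoc]
      congr 1
      have hh : aBS p ^ j = aBS p ^ (j - 1) * aBS p := by
        rw [← pow_succ]; congr 1; omega
      rw [hh, mul_inv_cancel_right]
  · -- multiply by s
    rcases Nat.eq_zero_or_pos i with rfl | hipos
    · -- i = 0, so j = 0 and w = 1
      have hj0 : j = 0 := by simpa using hj
      subst hj0
      exact ⟨0, sBS p ^ 1, memB 1, by simp⟩
    · by_cases hpj : p ∣ j
      · obtain ⟨t, rfl⟩ := hpj
        have ht : t < p ^ (i - 1) := by
          have hpi : p ^ i = p * p ^ (i - 1) := by rw [← pow_succ']; congr 1; omega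
          rw [hpi] at hj
          exact Nat.lt_of_mul_lt_mul_left hj
        refine ⟨0, (sBS p ^ (i-1))⁻¹ * aBS p ^ t, memC ht, ?_⟩
        have hcomm : aBS p ^ (p * t) * sBS p = sBS p * aBS p ^ t := by
          have h := sk_mul_zpow p 1 (t : ℤ)
          rw [pow_one, pow_one] at h
          rw [← zpow_natCast (aBS p) (p * t), ← zpow_natCast (aBS p) t,
            show ((p * t : ℕ) : ℤ) = (p:ℤ) * (t:ℤ) by push_cast; ring, h]
        have hsi : sBS p ^ i = sBS p * sBS p ^ (i - 1) := by
          rw [← pow_succ']; congr 1; omega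
        calc (sBS p ^ i)⁻¹ * aBS p ^ (p * t) * sBS p
            = (sBS p ^ i)⁻¹ * (aBS p ^ (p * t) * sBS p) := by rw [mul_assoc]
          _ = (sBS p ^ i)⁻¹ * (sBS p * aBS p ^ t) := by rw [hcomm]
          _ = aBS p ^ (0:ℤ) * ((sBS p ^ (i-1))⁻¹ * aBS p ^ t) := by
              rw [zpow_zero, one_mul, hsi, mul_inv_rev, mul_assoc]
              congr 1
              rw [← mul_assoc, inv_mul_cancel, one_mul]
      · exact ⟨0, (sBS p ^ i)⁻¹ * aBS p ^ j * sBS p ^ 1,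
          memA hipos one_pos hj hpj, by rw [zpow_zero, one_mul, pow_one]⟩
  · -- multiply by s⁻¹
    refine ⟨0, (sBS p ^ (i+1))⁻¹ * aBS p ^ (p * j), memC ?_, ?_⟩
    · calc p * j < p * p ^ i := by exact (mul_lt_mul_iff_right₀ hp).mpr hj
        _ = p ^ (i+1) := (pow_succ' p i).symm
    · have hcomm : aBS p ^ j * (sBS p)⁻¹ = (sBS p)⁻¹ * aBS p ^ (p * j) := by
        have h := sk_mul_zpow p 1 (j : ℤ)
        rw [pow_one, pow_one] at h
        -- h : s * a^j = a^(p*j) * s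
        rw [← zpow_natCast (aBS p) j, ← zpow_natCast (aBS p) (p * j),
          show ((p * j : ℕ) : ℤ) = (p:ℤ) * (j:ℤ) by push_cast; ring]
        calc aBS p ^ (j:ℤ) * (sBS p)⁻¹
            = (sBS p)⁻¹ * (sBS p * aBS p ^ (j:ℤ)) * (sBS p)⁻¹ := by group
          _ = (sBS p)⁻¹ * (aBS p ^ ((p:ℤ)*(j:ℤ)) * sBS p) * (sBS p)⁻¹ := by rw [h]
          _ = (sBS p)⁻¹ * aBS p ^ ((p:ℤ)*(j:ℤ)) := by group
      calc ((sBS p ^ i)⁻¹ * aBS p ^ j) * (sBS p)⁻¹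
          = (sBS p ^ i)⁻¹ * (aBS p ^ j * (sBS p)⁻¹) := by rw [mul_assoc]
        _ = (sBS p ^ i)⁻¹ * ((sBS p)⁻¹ * aBS p ^ (p * j)) := by rw [hcomm]
        _ = ((sBS p ^ i)⁻¹ * (sBS p)⁻¹) * aBS p ^ (p * j) := by rw [mul_assoc]
        _ = aBS p ^ (0:ℤ) * ((sBS p ^ (i+1))⁻¹ * aBS p ^ (p * j)) := by
            rw [zpow_zero, one_mul, pow_succ', mul_inv_rev]

lemma stepB (hp : 0 < p) (k : ℕ) (x : PresentedGroup (bsRels p))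
    (hx : x = aBS p ∨ x = (aBS p)⁻¹ ∨ x = sBS p ∨ x = (sBS p)⁻¹) :
    ∃ m : ℤ, ∃ w' ∈ TBS p, sBS p ^ k * x = aBS p ^ m * w' := by
  obtain rfl | rfl | rfl | rfl := hx
  · refine ⟨(p:ℤ)^k, sBS p ^ k, memB k, ?_⟩
    have h := sk_mul_zpow p k 1
    rw [zpow_one, mul_one] at h
    exact h
  · refine ⟨-(p:ℤ)^k, sBS p ^ k, memB k, ?_⟩
    have h := sk_mul_zpow p k (-1)
    rw [show ((p:ℤ)^k * (-1)) = -(p:ℤ)^k by ring, zpow_neg, zpow_one] at h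
    exact h
  · exact ⟨0, sBS p ^ (k+1), memB (k+1), by rw [zpow_zero, one_mul, pow_succ]⟩
  · rcases k with _ | t
    · refine ⟨0, (sBS p ^ 1)⁻¹ * aBS p ^ 0, memC (by simpa using hp), ?_⟩
      simp
    · exact ⟨0, sBS p ^ t, memB t, by rw [zpow_zero, one_mul, pow_succ, mul_inv_cancel_right]⟩

lemma stepA_a (hp : 0 < p) {i k j : ℕ} (hi : 0 < i) (hk : 0 < k) (hj : j < p ^ i)
    (hpj : ¬ p ∣ j) (ε : ℤ) :
    ∃ m : ℤ, ∃ w' ∈ TBS p,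
      ((sBS p ^ i)⁻¹ * aBS p ^ j * sBS p ^ k) * aBS p ^ ε = aBS p ^ m * w' := by
  set J : ℤ := (j:ℤ) + (p:ℤ)^k * ε with hJ
  have hpip : (0:ℤ) < (p:ℤ)^i := pow_pos (by exact_mod_cast hp) i
  set q := J / (p:ℤ)^i with hq
  set r := J % (p:ℤ)^i with hr
  have hr0 : 0 ≤ r := Int.emod_nonneg J hpip.ne'
  have hrlt : r < (p:ℤ)^i := Int.emod_lt_of_pos J hpip
  have hsplit : J = (p:ℤ)^i * q + r := (Int.mul_ediv_add_emod J _).symm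
  have hrc : ((r.toNat):ℤ) = r := Int.toNat_of_nonneg hr0
  have hrnat : r.toNat < p ^ i := by
    have h2 : ((p^i : ℕ):ℤ) = (p:ℤ)^i := by push_cast; ring
    omega
  have hpr : ¬ p ∣ r.toNat := by
    intro hdvd
    apply hpj
    have h1 : (p:ℤ) ∣ r := by rw [← hrc]; exact_mod_cast Int.natCast_dvd_natCast.mpr hdvd
    have h2 : (p:ℤ) ∣ (p:ℤ)^i := dvd_pow_self _ hi.ne'
    have h3 : (p:ℤ) ∣ (p:ℤ)^k := dvd_pow_self _ hk.ne'
    have h4 : (p:ℤ) ∣ (j:ℤ) := by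
      have hje : (j:ℤ) = (p:ℤ)^i * q + r - (p:ℤ)^k * ε := by
        rw [← hsplit]; rw [hJ]; ring
      rw [hje]
      exact dvd_sub (dvd_add (Dvd.dvd.mul_right h2 q) h1) (Dvd.dvd.mul_right h3 ε)
    exact_mod_cast h4
  refine ⟨q, (sBS p ^ i)⁻¹ * aBS p ^ r.toNat * sBS p ^ k, memA hi hk hrnat hpr, ?_⟩
  calc ((sBS p ^ i)⁻¹ * aBS p ^ j * sBS p ^ k) * aBS p ^ ε
      = (sBS p ^ i)⁻¹ * aBS p ^ (j:ℤ) * (sBS p ^ k * aBS p ^ ε) := by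
        rw [zpow_natCast, mul_assoc]
    _ = (sBS p ^ i)⁻¹ * aBS p ^ (j:ℤ) * (aBS p ^ ((p:ℤ)^k * ε) * sBS p ^ k) := by
        rw [sk_mul_zpow]
    _ = ((sBS p ^ i)⁻¹ * (aBS p ^ (j:ℤ) * aBS p ^ ((p:ℤ)^k * ε))) * sBS p ^ k := by
        rw [mul_assoc, mul_assoc, mul_assoc]
    _ = ((sBS p ^ i)⁻¹ * aBS p ^ J) * sBS p ^ k := by rw [← zpow_add, ← hJ]
    _ = (aBS p ^ q * ((sBS p ^ i)⁻¹ * aBS p ^ r)) * sBS p ^ k := by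
        rw [split_lemma p i J q r hsplit]
    _ = aBS p ^ q * ((sBS p ^ i)⁻¹ * aBS p ^ r.toNat * sBS p ^ k) := by
        rw [show r = ((r.toNat):ℤ) from hrc.symm, zpow_natCast, mul_assoc]
        rw [Int.toNat_of_nonneg hr0]

lemma stepA (hp : 0 < p) {i k j : ℕ} (hi : 0 < i) (hk : 0 < k) (hj : j < p ^ i)
    (hpj : ¬ p ∣ j) (x : PresentedGroup (bsRels p))
    (hx : x = aBS p ∨ x = (aBS p)⁻¹ ∨ x = sBS p ∨ x = (sBS p)⁻¹) :
    ∃ m : ℤ, ∃ w' ∈ TBS p,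
      ((sBS p ^ i)⁻¹ * aBS p ^ j * sBS p ^ k) * x = aBS p ^ m * w' := by
  obtain rfl | rfl | rfl | rfl := hx
  · have h := stepA_a hp hi hk hj hpj 1
    rwa [zpow_one] at h
  · have h := stepA_a hp hi hk hj hpj (-1)
    rwa [zpow_neg, zpow_one] at h
  · exact ⟨0, (sBS p ^ i)⁻¹ * aBS p ^ j * sBS p ^ (k+1),
      memA hi (Nat.succ_pos k) hj hpj, by rw [zpow_zero, one_mul, mul_assoc, ← pow_succ]⟩
  · rcases k with _ | t
    · omega
    · rcases Nat.eq_zero_or_pos t with rfl | ht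
      · exact ⟨0, (sBS p ^ i)⁻¹ * aBS p ^ j, memC hj,
          by rw [zpow_zero, one_mul, pow_one, mul_inv_cancel_right]⟩
      · exact ⟨0, (sBS p ^ i)⁻¹ * aBS p ^ j * sBS p ^ t, memA hi ht hj hpj,
          by rw [zpow_zero, one_mul, pow_succ, ← mul_assoc, mul_inv_cancel_right]⟩

lemma step (hp : 0 < p) {w : PresentedGroup (bsRels p)} (hw : w ∈ TBS p)
    (x : PresentedGroup (bsRels p))
    (hx : x = aBS p ∨ x = (aBS p)⁻¹ ∨ x = sBS p ∨ x = (sBS p)⁻¹) :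
    ∃ m : ℤ, ∃ w' ∈ TBS p, w * x = aBS p ^ m * w' := by
  rcases hw with (⟨i, k, j, hi, hk, hj, hpj, rfl⟩ | ⟨k, rfl⟩) | ⟨i, j, hj, rfl⟩
  · exact stepA hp hi hk hj hpj x hx
  · exact stepB hp k x hx
  · exact stepC hp hj x hx

end Step

section Main

variable {p : ℕ}

lemma exists_rep (hp : 0 < p) (g : PresentedGroup (bsRels p)) :
    ∃ w ∈ TBS p, ∃ m : ℤ, g = aBS p ^ m * w := by
  have hg : g ∈ Subgroup.closure
      (Set.range (PresentedGroup.of : Gen → PresentedGroup (bsRels p))) := by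
    rw [PresentedGroup.closure_range_of]; trivial
  induction hg using Subgroup.closure_induction_right with
  | one => exact ⟨sBS p ^ 0, memB 0, 0, by simp⟩
  | mul_right x hx y hy ih =>
    obtain ⟨w, hw, m, rfl⟩ := ih
    obtain ⟨c, rfl⟩ := hy
    have hxgen : (PresentedGroup.of c : PresentedGroup (bsRels p)) = aBS p ∨
        (PresentedGroup.of c : PresentedGroup (bsRels p)) = (aBS p)⁻¹ ∨
        (PresentedGroup.of c : PresentedGroup (bsRels p)) = sBS p ∨
        (PresentedGroup.of c : PresentedGroup (bsRels p)) = (sBS p)⁻¹ := by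
      cases c
      · left; rfl
      · right; right; left; rfl
    obtain ⟨m', w', hw', heq⟩ := step hp hw _ hxgen
    exact ⟨w', hw', m + m', by rw [mul_assoc, heq, ← mul_assoc, ← zpow_add]⟩
  | mul_inv_cancel x hx y hy ih =>
    obtain ⟨w, hw, m, rfl⟩ := ih
    obtain ⟨c, rfl⟩ := hy
    have hxgen : (PresentedGroup.of c : PresentedGroup (bsRels p))⁻¹ = aBS p ∨
        (PresentedGroup.of c : PresentedGroup (bsRels p))⁻¹ = (aBS p)⁻¹ ∨
        (PresentedGroup.of c : PresentedGroup (bsRels p))⁻¹ = sBS p ∨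
        (PresentedGroup.of c : PresentedGroup (bsRels p))⁻¹ = (sBS p)⁻¹ := by
      cases c
      · right; left; rfl
      · right; right; right; rfl
    obtain ⟨m', w', hw', heq⟩ := step hp hw _ hxgen
    exact ⟨w', hw', m + m', by rw [mul_assoc, heq, ← mul_assoc, ← zpow_add]⟩

variable [NeZero p]

lemma phi_form (i j k : ℕ) :
    phiBS p ((sBS p ^ i)⁻¹ * aBS p ^ j * sBS p ^ k) =
      ⟨(j:ℚ) * (p:ℚ)^(-(i:ℤ)), (k:ℤ) - i⟩ := by
  rw [map_mul, map_mul, map_inv, map_pow, map_pow, map_pow, phi_a, phi_s,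
    GBS.sG_pow, GBS.aG_pow, GBS.sG_pow, GBS.inv_def, GBS.mul_def, GBS.mul_def]
  ext <;> simp <;> ring

lemma mem_data {w : PresentedGroup (bsRels p)} (hw : w ∈ TBS p) :
    ∃ i j k : ℕ, j < p ^ i ∧ w = (sBS p ^ i)⁻¹ * aBS p ^ j * sBS p ^ k ∧
      ((0 < i ∧ 0 < k ∧ ¬ p ∣ j) ∨ (i = 0 ∧ j = 0) ∨ k = 0) := by
  rcases hw with (⟨i, k, j, hi, hk, hj, hpj, rfl⟩ | ⟨k, rfl⟩) | ⟨i, j, hj, rfl⟩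
  · exact ⟨i, j, k, hj, rfl, Or.inl ⟨hi, hk, hpj⟩⟩
  · exact ⟨0, 0, k, by simp, by simp, Or.inr (Or.inl ⟨rfl, rfl⟩)⟩
  · exact ⟨i, j, 0, hj, by simp, Or.inr (Or.inr rfl)⟩

lemma star_int {i₁ i₂ j₁ j₂ : ℕ} {m : ℤ}
    (h : (j₁:ℚ) * (p:ℚ)^(-(i₁:ℤ)) = m + (j₂:ℚ) * (p:ℚ)^(-(i₂:ℤ))) :
    (j₁:ℤ) * p ^ i₂ = m * p ^ (i₁ + i₂) + j₂ * p ^ i₁ := by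
  have hp : (p:ℚ) ≠ 0 := GBS.pQ_ne_zero p
  have hQ : (j₁:ℚ) * (p:ℚ) ^ i₂ = m * (p:ℚ) ^ (i₁ + i₂) + j₂ * (p:ℚ) ^ i₁ := by
    rw [zpow_neg, zpow_neg, zpow_natCast, zpow_natCast] at h
    have h1 : ((p:ℚ) ^ i₁) ≠ 0 := pow_ne_zero _ hp
    have h2 : ((p:ℚ) ^ i₂) ≠ 0 := pow_ne_zero _ hp
    field_simp at h
    rw [pow_add]
    linear_combination h
  exact_mod_cast hQ

lemma p_dvd_of_lt (hp : 0 < p) {i₁ i₂ j₁ j₂ : ℕ} {m : ℤ}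
    (hstar : (j₁:ℤ) * p ^ i₂ = m * p ^ (i₁ + i₂) + j₂ * p ^ i₁) (hlt : i₂ < i₁) :
    p ∣ j₁ := by
  have h1 : ((p:ℤ) ^ (i₂+1)) ∣ (j₁:ℤ) * p ^ i₂ := by
    rw [hstar]
    refine dvd_add ?_ ?_
    · exact dvd_mul_of_dvd_right (pow_dvd_pow _ (by omega)) m
    · exact dvd_mul_of_dvd_right (pow_dvd_pow _ (by omega)) _
  obtain ⟨c, hc⟩ := h1
  have hpi : ((p:ℤ) ^ i₂) ≠ 0 := pow_ne_zero _ (by exact_mod_cast hp.ne')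
  have hj : (j₁:ℤ) = p * c := by
    apply mul_left_cancel₀ hpi
    rw [pow_succ] at hc
    linear_combination hc
  have : (p:ℤ) ∣ (j₁:ℤ) := ⟨c, hj⟩
  exact_mod_cast this

lemma j_eq (hp : 0 < p) {i j₁ j₂ : ℕ} {m : ℤ}
    (hstar : (j₁:ℤ) * p ^ i = m * p ^ (i + i) + j₂ * p ^ i)
    (hj₁ : j₁ < p ^ i) (hj₂ : j₂ < p ^ i) : j₁ = j₂ := by
  have hpi : (0:ℤ) < (p:ℤ) ^ i := pow_pos (by exact_mod_cast hp) i
  have h1 : (j₁:ℤ) = m * p ^ i + j₂ := by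
    apply mul_right_cancel₀ hpi.ne'
    rw [hstar, pow_add]; ring
  have hb₁ : (j₁:ℤ) < p ^ i := by exact_mod_cast hj₁
  have hb₂ : (j₂:ℤ) < p ^ i := by exact_mod_cast hj₂
  have h0₁ : (0:ℤ) ≤ (j₁:ℤ) := Int.natCast_nonneg _
  have h0₂ : (0:ℤ) ≤ (j₂:ℤ) := Int.natCast_nonneg _
  have hm : m = 0 := by
    rcases lt_trichotomy m 0 with h | h | h
    · nlinarith
    · exact h
    · nlinarith
  rw [hm] at h1
  have : (j₁:ℤ) = (j₂:ℤ) := by linarith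
  exact_mod_cast this

lemma coset_unique (hp : p.Prime) {w₁ w₂ : PresentedGroup (bsRels p)}
    (h1 : w₁ ∈ TBS p) (h2 : w₂ ∈ TBS p) {m : ℤ}
    (heq : w₁ = aBS p ^ m * w₂) : w₁ = w₂ := by
  obtain ⟨i₁, j₁, k₁, hj₁, rfl, P₁⟩ := mem_data h1
  obtain ⟨i₂, j₂, k₂, hj₂, rfl, P₂⟩ := mem_data h2
  have hphi := congrArg (phiBS p) heq
  rw [phi_form, map_mul, map_zpow, phi_a, GBS.aG_zpow, phi_form, GBS.mul_def] at hphi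
  have E1 : (j₁:ℚ) * (p:ℚ)^(-(i₁:ℤ)) = m + (j₂:ℚ) * (p:ℚ)^(-(i₂:ℤ)) := by
    have := congrArg GBS.q hphi; simpa using this
  have E2 : (k₁:ℤ) - i₁ = (k₂:ℤ) - i₂ := by
    have := congrArg GBS.n hphi; simpa using this
  have hstar := star_int (p := p) E1
  have hstar' : (j₂:ℤ) * p ^ i₁ = (-m) * p ^ (i₂ + i₁) + j₁ * p ^ i₂ := by
    rw [show i₂ + i₁ = i₁ + i₂ by ring]; linarith [hstar]
  have hp0 : 0 < p := hp.pos
  suffices h : i₁ = i₂ ∧ j₁ = j₂ ∧ k₁ = k₂ by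
    obtain ⟨rfl, rfl, rfl⟩ := h; rfl
  rcases P₁ with ⟨hi₁, hk₁, hd₁⟩ | ⟨hi₁, hj₁0⟩ | hk₁ <;>
    rcases P₂ with ⟨hi₂, hk₂, hd₂⟩ | ⟨hi₂, hj₂0⟩ | hk₂
  · -- A A
    have hii : i₁ = i₂ := by
      rcases lt_trichotomy i₁ i₂ with h | h | h
      · exact absurd (p_dvd_of_lt hp0 hstar' h) hd₂
      · exact h
      · exact absurd (p_dvd_of_lt hp0 hstar h) hd₁
    subst hii
    exact ⟨rfl, j_eq hp0 hstar hj₁ hj₂, by omega⟩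
  · -- A B
    exact absurd (p_dvd_of_lt hp0 hstar (by omega)) hd₁
  · -- A C
    rcases lt_or_ge i₂ i₁ with h | h
    · exact absurd (p_dvd_of_lt hp0 hstar h) hd₁
    · exfalso; omega
  · -- B A
    exact absurd (p_dvd_of_lt hp0 hstar' (by omega)) hd₂
  · -- B B
    refine ⟨by omega, by omega, by omega⟩
  · -- B C
    have hi2 : i₂ = 0 := by omega
    have hj2 : j₂ = 0 := by
      have := hj₂; rw [hi2] at this; simpa using this
    refine ⟨by omega, by omega, by omega⟩
  · -- C A
    rcases lt_or_ge i₁ i₂ with h | h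
    · exact absurd (p_dvd_of_lt hp0 hstar' h) hd₂
    · exfalso; omega
  · -- C B
    have hi1 : i₁ = 0 := by omega
    have hj1 : j₁ = 0 := by
      have := hj₁; rw [hi1] at this; simpa using this
    refine ⟨by omega, by omega, by omega⟩
  · -- C C
    have hii : i₁ = i₂ := by omega
    subst hii
    exact ⟨rfl, j_eq hp0 hstar hj₁ hj₂, by omega⟩

end Main


/-- `T` is a right transversal of `⟨a⟩` in `BS(1,p)`: every element lies in the
right coset `⟨a⟩ w` of exactly one `w ∈ T`.  (In particular distinct elements of
`T` lie in distinct right cosets of `⟨a⟩`.) -/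
theorem TBS_is_right_transversal (p : ℕ) (hp : p.Prime) :
    ∀ g : PresentedGroup (bsRels p),
      ∃! w : PresentedGroup (bsRels p),
        w ∈ TBS p ∧ g * w⁻¹ ∈ Subgroup.zpowers (aBS p) := by
  haveI : NeZero p := ⟨hp.pos.ne'⟩
  intro g
  obtain ⟨w, hw, m, rfl⟩ := exists_rep hp.pos g
  refine ⟨w, ⟨hw, ?_⟩, ?_⟩
  · rw [mul_inv_cancel_right]
    exact Subgroup.mem_zpowers_iff.mpr ⟨m, rfl⟩
  · rintro w' ⟨hw', hmem⟩
    obtain ⟨m', hm'⟩ := Subgroup.mem_zpowers_iff.mp hmem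
    have h2 : aBS p ^ m' * w' = aBS p ^ m * w := by
      rw [hm']; group
    have hw'eq : w' = aBS p ^ (m - m') * w := by
      calc w' = (aBS p ^ m')⁻¹ * (aBS p ^ m' * w') := by group
        _ = (aBS p ^ m')⁻¹ * (aBS p ^ m * w) := by rw [h2]
        _ = aBS p ^ (m - m') * w := by
            rw [← zpow_neg, ← mul_assoc, ← zpow_add]
            congr 2
            ring
    exact coset_unique hp hw' hw hw'eq
end

section
/- There is a group isomorphism Θ from K = ⟨a, b, s | sas⁻¹ = ab, sbs⁻¹ = b⟩ to G = ⟨c, q | c(qcq⁻¹) = (qcq⁻¹)c⟩ satisfying Θ(a) = cq⁻¹, Θ(b) = qcq⁻¹c⁻¹, and Θ(s) = c. -/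
/-- Generators of `K = ⟨a, b, s | s a s⁻¹ = ab, s b s⁻¹ = b⟩`. -/
inductive GenK
  | a | b | s

/-- Generators of `G = ⟨c, q | c(qcq⁻¹) = (qcq⁻¹)c⟩`. -/
inductive GenG
  | c | q

/-- Relators of `K = ⟨a, b, s | s a s⁻¹ = ab, s b s⁻¹ = b⟩`. -/
def relsK : Set (FreeGroup GenK) :=
  { FreeGroup.of GenK.s * FreeGroup.of GenK.a * (FreeGroup.of GenK.s)⁻¹ *
      (FreeGroup.of GenK.a * FreeGroup.of GenK.b)⁻¹,
    FreeGroup.of GenK.s * FreeGroup.of GenK.b * (FreeGroup.of GenK.s)⁻¹ *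
      (FreeGroup.of GenK.b)⁻¹ }

/-- Relator of the Burns–Karrass–Solitar group `G = ⟨c, q | c(qcq⁻¹) = (qcq⁻¹)c⟩`. -/
def relsG : Set (FreeGroup GenG) :=
  { FreeGroup.of GenG.c *
      (FreeGroup.of GenG.q * FreeGroup.of GenG.c * (FreeGroup.of GenG.q)⁻¹) *
      ((FreeGroup.of GenG.q * FreeGroup.of GenG.c * (FreeGroup.of GenG.q)⁻¹) *
        FreeGroup.of GenG.c)⁻¹ }

private lemma rel_eq_one {α : Type*} {rels : Set (FreeGroup α)} {r : FreeGroup α}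
    (h : r ∈ rels) : PresentedGroup.mk rels r = 1 :=
  (QuotientGroup.eq_one_iff r).2 (Subgroup.subset_normalClosure h)

private lemma relK1 :
    (PresentedGroup.of GenK.s : PresentedGroup relsK) * PresentedGroup.of GenK.a *
      (PresentedGroup.of GenK.s)⁻¹ = PresentedGroup.of GenK.a * PresentedGroup.of GenK.b := by
  have h := rel_eq_one (rels := relsK)
    (r := FreeGroup.of GenK.s * FreeGroup.of GenK.a * (FreeGroup.of GenK.s)⁻¹ *
      (FreeGroup.of GenK.a * FreeGroup.of GenK.b)⁻¹) (Or.inl rfl)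
  simp only [map_mul, map_inv] at h
  exact mul_inv_eq_one.mp h

private lemma relK2 :
    (PresentedGroup.of GenK.s : PresentedGroup relsK) * PresentedGroup.of GenK.b *
      (PresentedGroup.of GenK.s)⁻¹ = PresentedGroup.of GenK.b := by
  have h := rel_eq_one (rels := relsK)
    (r := FreeGroup.of GenK.s * FreeGroup.of GenK.b * (FreeGroup.of GenK.s)⁻¹ *
      (FreeGroup.of GenK.b)⁻¹) (Or.inr rfl)
  simp only [map_mul, map_inv] at h
  exact mul_inv_eq_one.mp h

private lemma relG1 :
    (PresentedGroup.of GenG.c : PresentedGroup relsG) *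
      (PresentedGroup.of GenG.q * PresentedGroup.of GenG.c * (PresentedGroup.of GenG.q)⁻¹) =
    (PresentedGroup.of GenG.q * PresentedGroup.of GenG.c * (PresentedGroup.of GenG.q)⁻¹) *
      PresentedGroup.of GenG.c := by
  have h := rel_eq_one (rels := relsG)
    (r := FreeGroup.of GenG.c *
      (FreeGroup.of GenG.q * FreeGroup.of GenG.c * (FreeGroup.of GenG.q)⁻¹) *
      ((FreeGroup.of GenG.q * FreeGroup.of GenG.c * (FreeGroup.of GenG.q)⁻¹) *
        FreeGroup.of GenG.c)⁻¹) rfl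
  simp only [map_mul, map_inv] at h
  exact mul_inv_eq_one.mp h

/-- map on generators `K → G` -/
private def fK : GenK → PresentedGroup relsG
  | GenK.a => PresentedGroup.of GenG.c * (PresentedGroup.of GenG.q)⁻¹
  | GenK.b => PresentedGroup.of GenG.q * PresentedGroup.of GenG.c *
      (PresentedGroup.of GenG.q)⁻¹ * (PresentedGroup.of GenG.c)⁻¹
  | GenK.s => PresentedGroup.of GenG.c

/-- map on generators `G → K` -/
private def fG : GenG → PresentedGroup relsK
  | GenG.c => PresentedGroup.of GenK.s
  | GenG.q => (PresentedGroup.of GenK.a)⁻¹ * PresentedGroup.of GenK.s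

private lemma hK : ∀ r ∈ relsK, FreeGroup.lift fK r = 1 := by
  rintro r (rfl | rfl) <;>
    simp only [map_mul, map_inv, FreeGroup.lift_apply_of, fK]
  · group
  · rw [mul_inv_eq_one]
    set c := (PresentedGroup.of GenG.c : PresentedGroup relsG)
    set q := (PresentedGroup.of GenG.q : PresentedGroup relsG)
    have h := relG1
    calc c * (q * c * q⁻¹ * c⁻¹) * c⁻¹
        = (c * (q * c * q⁻¹)) * (c⁻¹ * c⁻¹) := by group
      _ = ((q * c * q⁻¹) * c) * (c⁻¹ * c⁻¹) := by rw [h]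
      _ = q * c * q⁻¹ * c⁻¹ := by group

private lemma hKey :
    (PresentedGroup.of GenK.s : PresentedGroup relsK) *
      ((PresentedGroup.of GenK.a)⁻¹ * PresentedGroup.of GenK.s * PresentedGroup.of GenK.a) =
    ((PresentedGroup.of GenK.a)⁻¹ * PresentedGroup.of GenK.s * PresentedGroup.of GenK.a) *
      PresentedGroup.of GenK.s := by
  have h1 : (PresentedGroup.of GenK.s : PresentedGroup relsK) * PresentedGroup.of GenK.a =
      PresentedGroup.of GenK.a * PresentedGroup.of GenK.b * PresentedGroup.of GenK.s := by
    rw [← relK1]; group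
  have h2 : (PresentedGroup.of GenK.s : PresentedGroup relsK) * PresentedGroup.of GenK.b =
      PresentedGroup.of GenK.b * PresentedGroup.of GenK.s := by
    conv_rhs => rw [← relK2]
    group
  have hba : (PresentedGroup.of GenK.a : PresentedGroup relsK)⁻¹ * PresentedGroup.of GenK.s *
      PresentedGroup.of GenK.a = PresentedGroup.of GenK.b * PresentedGroup.of GenK.s := by
    apply mul_left_cancel (a := (PresentedGroup.of GenK.a : PresentedGroup relsK))
    calc (PresentedGroup.of GenK.a : PresentedGroup relsK) *
          ((PresentedGroup.of GenK.a)⁻¹ * PresentedGroup.of GenK.s * PresentedGroup.of GenK.a)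
        = PresentedGroup.of GenK.s * PresentedGroup.of GenK.a := by group
      _ = PresentedGroup.of GenK.a * PresentedGroup.of GenK.b * PresentedGroup.of GenK.s := h1
      _ = PresentedGroup.of GenK.a *
          (PresentedGroup.of GenK.b * PresentedGroup.of GenK.s) := by group
  rw [hba, ← mul_assoc, h2]

private lemma hba' : (PresentedGroup.of GenK.a : PresentedGroup relsK)⁻¹ *
      PresentedGroup.of GenK.s * PresentedGroup.of GenK.a =
      PresentedGroup.of GenK.b * PresentedGroup.of GenK.s := by
  have h1 : (PresentedGroup.of GenK.s : PresentedGroup relsK) * PresentedGroup.of GenK.a =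
      PresentedGroup.of GenK.a * PresentedGroup.of GenK.b * PresentedGroup.of GenK.s := by
    rw [← relK1]; group
  apply mul_left_cancel (a := (PresentedGroup.of GenK.a : PresentedGroup relsK))
  calc (PresentedGroup.of GenK.a : PresentedGroup relsK) *
        ((PresentedGroup.of GenK.a)⁻¹ * PresentedGroup.of GenK.s * PresentedGroup.of GenK.a)
      = PresentedGroup.of GenK.s * PresentedGroup.of GenK.a := by group
    _ = PresentedGroup.of GenK.a * PresentedGroup.of GenK.b * PresentedGroup.of GenK.s := h1
    _ = PresentedGroup.of GenK.a *
        (PresentedGroup.of GenK.b * PresentedGroup.of GenK.s) := by group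

private lemma hG : ∀ r ∈ relsG, FreeGroup.lift fG r = 1 := by
  rintro r rfl
  simp only [map_mul, map_inv, FreeGroup.lift_apply_of, fG]
  rw [mul_inv_eq_one]
  trans (PresentedGroup.of GenK.s : PresentedGroup relsK) *
    ((PresentedGroup.of GenK.a)⁻¹ * PresentedGroup.of GenK.s * PresentedGroup.of GenK.a)
  · group
  · rw [hKey]; group

private def φ : PresentedGroup relsK →* PresentedGroup relsG := PresentedGroup.toGroup hK
private def ψ : PresentedGroup relsG →* PresentedGroup relsK := PresentedGroup.toGroup hG

private lemma psi_phi : ψ.comp φ = MonoidHom.id _ := by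
  ext x
  cases x <;>
    simp only [MonoidHom.comp_apply, MonoidHom.id_apply, φ, ψ, PresentedGroup.toGroup.of,
      fK, map_mul, map_inv, fG]
  · -- a : s * (a⁻¹ * s)⁻¹ = a
    group
  · -- b
    rw [show (PresentedGroup.of GenK.b : PresentedGroup relsK) =
        (PresentedGroup.of GenK.a)⁻¹ * PresentedGroup.of GenK.s * PresentedGroup.of GenK.a *
          (PresentedGroup.of GenK.s)⁻¹ by rw [hba']; group]
    group

private lemma phi_psi : φ.comp ψ = MonoidHom.id _ := by
  ext x
  cases x <;>
    simp only [MonoidHom.comp_apply, MonoidHom.id_apply, φ, ψ, PresentedGroup.toGroup.of,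
      fG, map_mul, map_inv, fK]
  group

/-- There is an isomorphism `Θ : K ≃ G` with `Θ(a) = cq⁻¹`, `Θ(b) = qcq⁻¹c⁻¹`,
`Θ(s) = c`. -/
theorem K_iso_G :
    ∃ Θ : PresentedGroup relsK ≃* PresentedGroup relsG,
      Θ (PresentedGroup.of GenK.a) =
        PresentedGroup.of GenG.c * (PresentedGroup.of GenG.q)⁻¹ ∧
      Θ (PresentedGroup.of GenK.b) =
        PresentedGroup.of GenG.q * PresentedGroup.of GenG.c *
          (PresentedGroup.of GenG.q)⁻¹ * (PresentedGroup.of GenG.c)⁻¹ ∧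
      Θ (PresentedGroup.of GenK.s) = PresentedGroup.of GenG.c := by
  refine ⟨MonoidHom.toMulEquiv φ ψ psi_phi phi_psi, ?_, ?_, ?_⟩ <;>
    simp [MonoidHom.toMulEquiv, φ, PresentedGroup.toGroup.of, fK]
end

section
/- Let G = ⟨c, q | c(qcq⁻¹) = (qcq⁻¹)c⟩ and for each i ∈ ℤ set cᵢ = qⁱ c q⁻ⁱ. Then the homomorphism from the right-angled Artin group on the infinite line A = ⟨xᵢ (i ∈ ℤ) | xᵢ x_{i+1} = x_{i+1} xᵢ (i ∈ ℤ)⟩ to G sending xᵢ ↦ cᵢ is injective; in particular the subgroup of G generated by {cᵢ : i ∈ ℤ} is isomorphic to A. -/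
open scoped commutatorElement

/-- Relators of the right-angled Artin group on the infinite line:
`⟨xᵢ (i ∈ ℤ) | xᵢ x_{i+1} = x_{i+1} xᵢ⟩`. -/
def raagLineRels : Set (FreeGroup ℤ) :=
  { r | ∃ i : ℤ, r = ⁅FreeGroup.of i, FreeGroup.of (i + 1)⁆ }

/-- The element `cᵢ = qⁱ c q⁻ⁱ` of `G`. -/
def cElt (i : ℤ) : PresentedGroup relsG :=
  (PresentedGroup.of GenG.q : PresentedGroup relsG) ^ i * PresentedGroup.of GenG.c *
    (PresentedGroup.of GenG.q : PresentedGroup relsG) ^ (-i)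

namespace RaagAux

abbrev A := PresentedGroup raagLineRels

lemma mk_rel_one {α : Type*} {rels : Set (FreeGroup α)} {r : FreeGroup α} (h : r ∈ rels) :
    PresentedGroup.mk rels r = 1 := by
  have := Subgroup.subset_normalClosure (s := rels) h
  exact (QuotientGroup.eq_one_iff r).2 this

lemma commA (i : ℤ) : Commute (PresentedGroup.of i : A) (PresentedGroup.of (i + 1)) := by
  have : PresentedGroup.mk raagLineRels ⁅FreeGroup.of i, FreeGroup.of (i + 1)⁆ = 1 :=
    mk_rel_one ⟨i, rfl⟩
  rw [map_commutatorElement] at this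
  exact commutatorElement_eq_one_iff_commute.mp this

lemma commA' (i j : ℤ) (h : j = i + 1) :
    Commute (PresentedGroup.of i : A) (PresentedGroup.of j) := h ▸ commA i

/-- shift by k -/
def shift (k : ℤ) : A →* A :=
  PresentedGroup.toGroup (f := fun i => (PresentedGroup.of (i + k) : A)) (by
    rintro r ⟨i, rfl⟩
    rw [map_commutatorElement, commutatorElement_eq_one_iff_commute]
    simp only [FreeGroup.lift_apply_of]
    exact commA' (i + k) (i + 1 + k) (by ring))

@[simp] lemma shift_of (k i : ℤ) : shift k (PresentedGroup.of i) = PresentedGroup.of (i + k) :=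
  PresentedGroup.toGroup.of _

/-- shift as an automorphism -/
def σ : MulAut A :=
  MonoidHom.toMulEquiv (shift 1) (shift (-1))
    (by ext i; simp) (by ext i; simp)

lemma σ_of (i : ℤ) : σ (PresentedGroup.of i) = PresentedGroup.of (i + 1) := shift_of 1 i

lemma σ_inv_of (i : ℤ) : σ⁻¹ (PresentedGroup.of i) = PresentedGroup.of (i - 1) := by
  have : (σ⁻¹ : MulAut A) (PresentedGroup.of i) = shift (-1) (PresentedGroup.of i) := rfl
  rw [this, shift_of, sub_eq_add_neg]

lemma σ_zpow (n : ℤ) : ∀ j : ℤ,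
    (σ ^ n) (PresentedGroup.of j : A) = PresentedGroup.of (j + n) := by
  induction n using Int.induction_on with
  | zero => intro j; simp
  | succ k ih =>
      intro j
      have h : σ ^ ((k : ℤ) + 1) = σ ^ (k : ℤ) * σ := by rw [zpow_add, zpow_one]
      rw [h, MulAut.mul_apply, σ_of, ih]; congr 1; ring
  | pred k ih =>
      intro j
      have h : σ ^ (-(k : ℤ) - 1) = σ ^ (-(k : ℤ)) * σ⁻¹ := by
        rw [sub_eq_add_neg, zpow_add, zpow_neg_one]
      rw [h, MulAut.mul_apply, σ_inv_of, ih]; congr 1; ring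

/-- the action of ℤ on A by shifts -/
def act : Multiplicative ℤ →* MulAut A := zpowersHom (MulAut A) σ

abbrev H := SemidirectProduct A (Multiplicative ℤ) act

lemma inr_inl_conj (n a : ℤ) :
    (SemidirectProduct.inr (Multiplicative.ofAdd n) : H) * SemidirectProduct.inl (PresentedGroup.of a) *
      (SemidirectProduct.inr (Multiplicative.ofAdd n))⁻¹
      = SemidirectProduct.inl (PresentedGroup.of (a + n)) := by
  rw [← map_inv, ← SemidirectProduct.inl_aut]
  rw [show act (Multiplicative.ofAdd n) = σ ^ n from rfl, σ_zpow]

open SemidirectProduct in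
/-- the iso `G ≃ A ⋊ ℤ`, as a hom from `G` -/
def ψ : PresentedGroup relsG →* H :=
  PresentedGroup.toGroup
    (f := fun g => match g with
      | GenG.c => (inl (PresentedGroup.of 0) : H)
      | GenG.q => inr (Multiplicative.ofAdd 1))
    (by
      rintro r hr
      have hr' : r = FreeGroup.of GenG.c *
          (FreeGroup.of GenG.q * FreeGroup.of GenG.c * (FreeGroup.of GenG.q)⁻¹) *
          ((FreeGroup.of GenG.q * FreeGroup.of GenG.c * (FreeGroup.of GenG.q)⁻¹) *
            FreeGroup.of GenG.c)⁻¹ := hr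
      subst hr'
      simp only [map_mul, map_inv, FreeGroup.lift_apply_of]
      have key : (inr (Multiplicative.ofAdd 1) : H) * inl (PresentedGroup.of 0) *
          (inr (Multiplicative.ofAdd 1))⁻¹ = inl (PresentedGroup.of 1) := by
        simpa using inr_inl_conj 1 0
      rw [key]
      have hc := (commA 0).map (inl : A →* H)
      norm_num at hc
      rw [mul_inv_eq_one]
      exact hc.eq)

lemma ψ_c : ψ (PresentedGroup.of GenG.c) = SemidirectProduct.inl (PresentedGroup.of 0) :=
  PresentedGroup.toGroup.of _

lemma ψ_q : ψ (PresentedGroup.of GenG.q) = SemidirectProduct.inr (Multiplicative.ofAdd 1) :=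
  PresentedGroup.toGroup.of _

/-- commutation of the cᵢ in G -/
lemma comm_cElt (i : ℤ) : Commute (cElt i) (cElt (i + 1)) := by
  have base : Commute (PresentedGroup.of GenG.c : PresentedGroup relsG)
      (PresentedGroup.of GenG.q * PresentedGroup.of GenG.c *
        (PresentedGroup.of GenG.q)⁻¹) := by
    have h1 : PresentedGroup.mk relsG
        (FreeGroup.of GenG.c *
          (FreeGroup.of GenG.q * FreeGroup.of GenG.c * (FreeGroup.of GenG.q)⁻¹) *
          ((FreeGroup.of GenG.q * FreeGroup.of GenG.c * (FreeGroup.of GenG.q)⁻¹) *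
            FreeGroup.of GenG.c)⁻¹) = 1 := mk_rel_one rfl
    simp only [map_mul, map_inv] at h1
    rw [mul_inv_eq_one] at h1
    exact h1
  have conj := base.map (MulAut.conj ((PresentedGroup.of GenG.q : PresentedGroup relsG) ^ i)).toMonoidHom
  have e1 : (MulAut.conj ((PresentedGroup.of GenG.q : PresentedGroup relsG) ^ i)).toMonoidHom
      (PresentedGroup.of GenG.c) = cElt i := by
    simp only [MulEquiv.coe_toMonoidHom, MulAut.conj_apply, cElt]
    group
  have e2 : (MulAut.conj ((PresentedGroup.of GenG.q : PresentedGroup relsG) ^ i)).toMonoidHom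
      (PresentedGroup.of GenG.q * PresentedGroup.of GenG.c * (PresentedGroup.of GenG.q)⁻¹)
      = cElt (i + 1) := by
    simp only [MulEquiv.coe_toMonoidHom, MulAut.conj_apply, cElt]
    group
  rwa [e1, e2] at conj

/-- the map A → G, xᵢ ↦ cᵢ -/
def φ : A →* PresentedGroup relsG :=
  PresentedGroup.toGroup (f := cElt) (by
    rintro r ⟨i, rfl⟩
    rw [map_commutatorElement, commutatorElement_eq_one_iff_commute]
    simp only [FreeGroup.lift_apply_of]
    exact comm_cElt i)

@[simp] lemma φ_of (i : ℤ) : φ (PresentedGroup.of i) = cElt i := PresentedGroup.toGroup.of _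

lemma ψ_cElt (i : ℤ) : ψ (cElt i) = SemidirectProduct.inl (PresentedGroup.of i) := by
  have hq : ψ ((PresentedGroup.of GenG.q : PresentedGroup relsG) ^ i)
      = SemidirectProduct.inr (Multiplicative.ofAdd i) := by
    rw [map_zpow, ψ_q, ← map_zpow]
    congr 1
    rw [← ofAdd_zsmul]; norm_num
  rw [cElt, map_mul, map_mul, ψ_c, hq, map_zpow, ψ_q, ← map_zpow,
    ← ofAdd_zsmul, smul_eq_mul, mul_one]
  simpa using inr_inl_conj i 0

lemma ψ_comp_φ : ψ.comp φ = SemidirectProduct.inl := by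
  refine PresentedGroup.ext fun i => ?_
  simp only [MonoidHom.comp_apply, φ_of]
  exact ψ_cElt i

lemma φ_injective : Function.Injective φ := by
  have h : Function.Injective (ψ.comp φ) := by
    rw [ψ_comp_φ]; exact SemidirectProduct.inl_injective
  exact Function.Injective.of_comp h

end RaagAux

/-- The homomorphism from the RAAG on the infinite line to `G` sending `xᵢ ↦ cᵢ` is
injective; in particular the subgroup of `G` generated by the `cᵢ` is isomorphic to
that RAAG (it is the image of this injective homomorphism). -/
theorem raag_line_embeds :
    ∃ φ : PresentedGroup raagLineRels →* PresentedGroup relsG,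
      (∀ i : ℤ, φ (PresentedGroup.of i) = cElt i) ∧
      Function.Injective φ ∧
      φ.range = Subgroup.closure (Set.range cElt) := by
  refine ⟨RaagAux.φ, fun i => RaagAux.φ_of i, RaagAux.φ_injective, ?_⟩
  rw [MonoidHom.range_eq_map, ← PresentedGroup.closure_range_of raagLineRels,
    MonoidHom.map_closure]
  congr 1
  rw [← Set.range_comp]
  ext x
  simp [Function.comp]
end

section
/- Let K = ⟨a, b, s | sas⁻¹ = ab, sbs⁻¹ = b⟩. Then the centraliser of s in K is the subgroup generated by {aba⁻¹, b, s}. -/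
namespace KWork

open HNNExtension Subgroup Multiplicative

abbrev Z2 := Multiplicative (ℤ × ℤ)

def bb : Z2 := ofAdd (1, 0)
def ss : Z2 := ofAdd (0, 1)

def pAB : Z2 →* Z2 :=
  AddMonoidHom.toMultiplicative ((AddMonoidHom.inr ℤ ℤ).comp (AddMonoidHom.snd ℤ ℤ))

def qAB : Z2 →* Z2 :=
  AddMonoidHom.toMultiplicative ((AddMonoidHom.snd ℤ ℤ).prod (AddMonoidHom.snd ℤ ℤ))

@[simp] lemma pAB_bs : pAB (bb * ss) = ss := by
  simp [pAB, bb, ss, ← ofAdd_add]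

@[simp] lemma qAB_ss : qAB ss = bb * ss := by
  simp [qAB, bb, ss, ← ofAdd_add]

def SA : Subgroup Z2 := Subgroup.zpowers (bb * ss)
def SB : Subgroup Z2 := Subgroup.zpowers ss

def φAB : SA ≃* SB where
  toFun x := ⟨pAB x, by
    obtain ⟨k, hk⟩ := Subgroup.mem_zpowers_iff.mp x.2
    exact Subgroup.mem_zpowers_iff.mpr ⟨k, by rw [← hk, map_zpow, pAB_bs]⟩⟩
  invFun y := ⟨qAB y, by
    obtain ⟨k, hk⟩ := Subgroup.mem_zpowers_iff.mp y.2
    exact Subgroup.mem_zpowers_iff.mpr ⟨k, by rw [← hk, map_zpow, qAB_ss]⟩⟩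
  left_inv x := by
    obtain ⟨k, hk⟩ := Subgroup.mem_zpowers_iff.mp x.2
    ext : 1
    simp only [← hk, map_zpow, pAB_bs, qAB_ss]
  right_inv y := by
    obtain ⟨k, hk⟩ := Subgroup.mem_zpowers_iff.mp y.2
    ext : 1
    simp only [← hk, map_zpow, pAB_bs, qAB_ss]
  map_mul' x y := by ext : 1; simp

@[simp] lemma φAB_coe (x : SA) : (φAB x : Z2) = pAB x := rfl

abbrev Ghat := HNNExtension Z2 SA SB φAB

def σ : Ghat := of ss
def τ : Ghat := of (bb * ss)

lemma bs_mem_SA : bb * ss ∈ SA := Subgroup.mem_zpowers _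

lemma t_mul_τ : (t * τ : Ghat) = σ * t := by
  have := t_mul_of (φ := φAB) ⟨bb * ss, bs_mem_SA⟩
  simpa [τ, σ] using this

lemma σ_mul_t : (σ * t : Ghat) = t * τ := (t_mul_τ).symm

lemma τ_mul_tinv : (τ * t⁻¹ : Ghat) = t⁻¹ * σ := by
  have h := t_mul_τ
  calc (τ * t⁻¹ : Ghat) = t⁻¹ * (t * τ) * t⁻¹ := by group
  _ = t⁻¹ * (σ * t) * t⁻¹ := by rw [h]
  _ = t⁻¹ * σ := by group

/-- the generators of the centraliser, inside the HNN extension -/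
def Hgen : Set Ghat := {t * of bb * t⁻¹, of bb, of ss}

def H : Subgroup Ghat := Subgroup.closure Hgen

lemma decompose_Z2 (g : Z2) : bb ^ (toAdd g).1 * ss ^ (toAdd g).2 = g := by
  rcases g with ⟨m, j⟩
  simp [bb, ss, ← ofAdd_zsmul, ← ofAdd_add]
  rfl

lemma of_mem_H (g : Z2) : (of g : Ghat) ∈ H := by
  rw [← decompose_Z2 g, map_mul, map_zpow, map_zpow]
  exact mul_mem (zpow_mem (Subgroup.subset_closure (by simp [Hgen])) _)
    (zpow_mem (Subgroup.subset_closure (by simp [Hgen])) _)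

lemma conj_of_mem_H (g : Z2) : (t * of g * t⁻¹ : Ghat) ∈ H := by
  have hb : (t * of bb * t⁻¹ : Ghat) ∈ H := Subgroup.subset_closure (by simp [Hgen])
  have hσ : (σ : Ghat) ∈ H := Subgroup.subset_closure (by simp [Hgen, σ])
  have hs : (t * of ss * t⁻¹ : Ghat) ∈ H := by
    have : (t * of ss * t⁻¹ : Ghat) = (t * of bb * t⁻¹)⁻¹ * σ := by
      have h1 : (t * τ : Ghat) = σ * t := t_mul_τ
      have : (τ : Ghat) = of bb * of ss := by rw [τ, map_mul]
      rw [this] at h1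
      -- t * (of bb * of ss) = σ * t
      calc (t * of ss * t⁻¹ : Ghat)
          = (t * of bb * t⁻¹)⁻¹ * (t * (of bb * of ss) * t⁻¹) := by group
        _ = (t * of bb * t⁻¹)⁻¹ * (σ * t * t⁻¹) := by rw [h1]
        _ = (t * of bb * t⁻¹)⁻¹ * σ := by group
    rw [this]
    exact mul_mem (inv_mem hb) hσ
  have heq : (t * of g * t⁻¹ : Ghat)
      = (t * of bb * t⁻¹) ^ (toAdd g).1 * (t * of ss * t⁻¹) ^ (toAdd g).2 := by
    conv_lhs => rw [← decompose_Z2 g]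
    rw [map_mul, map_zpow, map_zpow, conj_zpow, conj_zpow]
    group
  rw [heq]
  exact mul_mem (zpow_mem hb _) (zpow_mem hs _)

lemma ss_inv_not_mem_SA : ss⁻¹ ∉ SA := by
  rintro ⟨k, hk⟩
  have := congrArg (fun x => toAdd x) hk
  simp [bb, ss, ← ofAdd_add, ← ofAdd_zsmul, Prod.ext_iff] at this
  omega

lemma bs_inv_not_mem_SB : (bb * ss)⁻¹ ∉ SB := by
  rintro ⟨k, hk⟩
  have := congrArg (fun x => toAdd x) hk
  simp [bb, ss, ← ofAdd_add, ← ofAdd_zsmul, Prod.ext_iff] at this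

section Words

abbrev RW := HNNExtension.NormalWord.ReducedWord Z2 SA SB

lemma prod_nil (h : Z2) (ch) :
    HNNExtension.NormalWord.ReducedWord.prod φAB ⟨h, [], ch⟩ = (of h : Ghat) := by
  simp [HNNExtension.NormalWord.ReducedWord.prod]

lemma prod_cons' (h c : Z2) (u : ℤˣ) (l) (ch) (ch') :
    HNNExtension.NormalWord.ReducedWord.prod φAB ⟨h, (u, c) :: l, ch⟩ =
      (of h : Ghat) * t ^ (u : ℤ) * HNNExtension.NormalWord.ReducedWord.prod φAB ⟨c, l, ch'⟩ := by
  simp [HNNExtension.NormalWord.ReducedWord.prod, mul_assoc]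

lemma exists_mulRight (w : RW) (x : Z2) (hne : w.toList ≠ []) :
    ∃ w' : RW, w'.prod φAB = w.prod φAB * of x ∧ w'.head = w.head ∧
      w'.toList.map Prod.fst = w.toList.map Prod.fst := by
  obtain ⟨h, l, ch⟩ := w
  rcases List.eq_nil_or_concat' l with rfl | ⟨l₀, ⟨u, c⟩, rfl⟩
  · simp at hne
  · rw [List.isChain_append] at ch
    obtain ⟨c1, _, c3⟩ := ch
    refine ⟨⟨h, l₀ ++ [(u, c * x)], ?_⟩, ?_, rfl, ?_⟩
    · rw [List.isChain_append]
      refine ⟨c1, List.isChain_singleton _, ?_⟩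
      intro p hp q hq
      simp only [List.head?_cons, Option.mem_def, Option.some.injEq] at hq
      subst hq
      exact c3 p hp (u, c) (by simp)
    · simp [HNNExtension.NormalWord.ReducedWord.prod, List.map_append, List.prod_append,
        map_mul, mul_assoc]
    · simp

local notation "RWprod" => HNNExtension.NormalWord.ReducedWord.prod φAB

lemma inv_mul_aux (x h : Z2) : (x * h)⁻¹ * h = x⁻¹ := by
  rw [mul_inv_rev, mul_comm h⁻¹ x⁻¹, mul_assoc, inv_mul_cancel, mul_one]

lemma comm_of (x y : Z2) : (of x : Ghat) * of y = of y * of x := by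
  rw [← map_mul, ← map_mul, mul_comm]

theorem key (l : List (ℤˣ × Z2)) :
    ∀ (h : Z2) (ch : List.IsChain
        (fun a b => a.2 ∈ toSubgroup SA SB a.1 → a.1 = b.1) l),
      (σ * RWprod ⟨h, l, ch⟩ = RWprod ⟨h, l, ch⟩ * σ → RWprod ⟨h, l, ch⟩ ∈ H) ∧
      (τ * RWprod ⟨h, l, ch⟩ = RWprod ⟨h, l, ch⟩ * σ → t * RWprod ⟨h, l, ch⟩ ∈ H) := by
  induction l with
  | nil =>
    intro h ch
    rw [prod_nil]
    constructor
    · intro _; exact of_mem_H h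
    · intro hE
      exfalso
      rw [τ, σ, ← map_mul, ← map_mul] at hE
      have h1 : bb * ss * h = h * ss := of_injective φAB hE
      have h2 : bb = 1 := by
        have : bb * (ss * h) = 1 * (ss * h) := by
          rw [one_mul, ← mul_assoc, h1, mul_comm]
        exact mul_right_cancel this
      have := congrArg toAdd h2
      simp [bb, Prod.ext_iff] at this
  | cons p l ih =>
    obtain ⟨u, c⟩ := p
    intro h ch
    have ch' := (List.isChain_cons.mp ch).2
    rcases Int.units_eq_one_or u with rfl | rfl
    · -- u = 1
      rw [prod_cons' h c 1 l ch ch']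
      set P : Ghat := RWprod ⟨c, l, ch'⟩ with hP
      simp only [Units.val_one, zpow_one]
      constructor
      · intro hE
        -- derive τ * P = P * σ
        have hE' : σ * (t * P) = (t * P) * σ := by
          apply mul_left_cancel (a := (of h : Ghat))
          calc (of h : Ghat) * (σ * (t * P)) = (of h * σ) * (t * P) := by group
            _ = (σ * of h) * (t * P) := by rw [σ, comm_of]
            _ = σ * (of h * t * P) := by group
            _ = of h * t * P * σ := hE
            _ = of h * ((t * P) * σ) := by group
        have hE2 : τ * P = P * σ := by
          apply mul_left_cancel (a := (t : Ghat))
          calc (t : Ghat) * (τ * P) = (t * τ) * P := by group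
            _ = (σ * t) * P := by rw [t_mul_τ]
            _ = σ * (t * P) := by group
            _ = (t * P) * σ := hE'
            _ = t * (P * σ) := by group
        have := (ih c ch').2 hE2
        rw [show (of h : Ghat) * t * P = of h * (t * P) by group]
        exact mul_mem (of_mem_H h) this
      · intro hE
        exfalso
        -- Britton-style contradiction
        have hne : (((1 : ℤˣ), c) :: l : List (ℤˣ × Z2)) ≠ [] := by simp
        obtain ⟨w', hw'prod, hw'head, hw'fst⟩ :=
          exists_mulRight ⟨h, ((1 : ℤˣ), c) :: l, ch⟩ ss hne
        have hprod₁ : RWprod ⟨bb * ss * h, ((1 : ℤˣ), c) :: l, ch⟩ =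
            τ * RWprod ⟨h, ((1 : ℤˣ), c) :: l, ch⟩ := by
          simp [HNNExtension.NormalWord.ReducedWord.prod, τ, map_mul, mul_assoc]
        have hpq : RWprod ⟨bb * ss * h, ((1 : ℤˣ), c) :: l, ch⟩ = w'.prod φAB := by
          rw [hprod₁, hw'prod]
          rw [prod_cons' h c 1 l ch ch']
          simp only [Units.val_one, zpow_one]
          rw [← hP, hE]
          rfl
        have hmem := (HNNExtension.ReducedWord.map_fst_eq_and_of_prod_eq φAB hpq).2
          1 (by simp)
        rw [hw'head] at hmem
        rw [show ((bb * ss * h)⁻¹ * h : Z2) = (bb * ss)⁻¹ from inv_mul_aux _ _,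
          toSubgroup_neg_one] at hmem
        exact bs_inv_not_mem_SB hmem
    · -- u = -1
      rw [prod_cons' h c (-1) l ch ch']
      set P : Ghat := RWprod ⟨c, l, ch'⟩ with hP
      have ht : (t : Ghat) ^ ((((-1 : ℤˣ) : ℤˣ) : ℤ)) = t⁻¹ := by
        norm_num
      constructor
      · intro hE
        exfalso
        have hne : (((-1 : ℤˣ), c) :: l : List (ℤˣ × Z2)) ≠ [] := by simp
        obtain ⟨w', hw'prod, hw'head, hw'fst⟩ :=
          exists_mulRight ⟨h, ((-1 : ℤˣ), c) :: l, ch⟩ ss hne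
        have hprod₁ : RWprod ⟨ss * h, ((-1 : ℤˣ), c) :: l, ch⟩ =
            σ * RWprod ⟨h, ((-1 : ℤˣ), c) :: l, ch⟩ := by
          simp [HNNExtension.NormalWord.ReducedWord.prod, σ, map_mul, mul_assoc]
        have hpq : RWprod ⟨ss * h, ((-1 : ℤˣ), c) :: l, ch⟩ = w'.prod φAB := by
          rw [hprod₁, hw'prod]
          rw [prod_cons' h c (-1) l ch ch']
          rw [← hP, hE]
          rfl
        have hmem := (HNNExtension.ReducedWord.map_fst_eq_and_of_prod_eq φAB hpq).2
          (-1) (by simp)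
        rw [hw'head] at hmem
        rw [show ((ss * h)⁻¹ * h : Z2) = ss⁻¹ from inv_mul_aux _ _] at hmem
        simp only [neg_neg, toSubgroup_one] at hmem
        exact ss_inv_not_mem_SA hmem
      · intro hE
        rw [ht] at hE ⊢
        have hE' : τ * (t⁻¹ * P) = (t⁻¹ * P) * σ := by
          apply mul_left_cancel (a := (of h : Ghat))
          calc (of h : Ghat) * (τ * (t⁻¹ * P)) = (of h * τ) * (t⁻¹ * P) := by group
            _ = (τ * of h) * (t⁻¹ * P) := by rw [τ, comm_of]
            _ = τ * (of h * t⁻¹ * P) := by group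
            _ = of h * t⁻¹ * P * σ := hE
            _ = of h * ((t⁻¹ * P) * σ) := by group
        have hE2 : σ * P = P * σ := by
          apply mul_left_cancel (a := (t⁻¹ : Ghat))
          calc (t⁻¹ : Ghat) * (σ * P) = (t⁻¹ * σ) * P := by group
            _ = (τ * t⁻¹) * P := by rw [τ_mul_tinv]
            _ = τ * (t⁻¹ * P) := by group
            _ = (t⁻¹ * P) * σ := hE'
            _ = t⁻¹ * (P * σ) := by group
        have hPH := (ih c ch').1 hE2
        rw [show (t : Ghat) * (of h * t⁻¹ * P) = (t * of h * t⁻¹) * P by group]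
        exact mul_mem (conj_of_mem_H h) hPH

theorem centralizer_sigma : Subgroup.centralizer {σ} = H := by
  apply le_antisymm
  · intro g hg
    have hcomm : σ * g = g * σ :=
      Subgroup.mem_centralizer_iff.mp hg σ (Set.mem_singleton σ)
    obtain ⟨d⟩ := HNNExtension.NormalWord.TransversalPair.nonempty Z2 SA SB
    set w : HNNExtension.NormalWord d := g • HNNExtension.NormalWord.empty with hw
    have hprod : HNNExtension.NormalWord.ReducedWord.prod φAB w.toReducedWord = g := by
      rw [hw]
      simp
    have hk := (key w.toReducedWord.toList w.toReducedWord.head w.toReducedWord.chain).1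
    rw [show (⟨w.toReducedWord.head, w.toReducedWord.toList, w.toReducedWord.chain⟩ :
        HNNExtension.NormalWord.ReducedWord Z2 SA SB) = w.toReducedWord from rfl, hprod] at hk
    exact hk hcomm
  · rw [H, Subgroup.closure_le]
    rintro x hx
    simp only [Hgen, Set.mem_insert_iff, Set.mem_singleton_iff] at hx
    have hmem : ∀ y : Ghat, σ * y = y * σ → y ∈ Subgroup.centralizer {σ} := by
      intro y hy
      rw [Subgroup.mem_centralizer_iff]
      rintro z hz
      rw [Set.mem_singleton_iff] at hz
      subst hz
      exact hy
    rcases hx with rfl | rfl | rfl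
    · apply hmem
      calc σ * (t * of bb * t⁻¹) = (σ * t) * of bb * t⁻¹ := by group
        _ = (t * τ) * of bb * t⁻¹ := by rw [σ_mul_t]
        _ = t * (τ * of bb) * t⁻¹ := by group
        _ = t * (of bb * τ) * t⁻¹ := by rw [τ, comm_of]
        _ = t * of bb * (τ * t⁻¹) := by group
        _ = t * of bb * (t⁻¹ * σ) := by rw [τ_mul_tinv]
        _ = (t * of bb * t⁻¹) * σ := by group
    · exact hmem _ (by rw [σ, comm_of])
    · exact hmem _ (by rw [σ, comm_of])

end Words

section Iso

abbrev K := PresentedGroup relsK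

def Ak : K := PresentedGroup.of GenK.a
def Bk : K := PresentedGroup.of GenK.b
def Sk : K := PresentedGroup.of GenK.s

lemma mk_rel_one {r : FreeGroup GenK} (hr : r ∈ relsK) : PresentedGroup.mk relsK r = 1 :=
  (QuotientGroup.eq_one_iff r).mpr (Subgroup.subset_normalClosure hr)

lemma rel1 : Sk * Ak = Ak * Bk * Sk := by
  have h := mk_rel_one (r := FreeGroup.of GenK.s * FreeGroup.of GenK.a *
      (FreeGroup.of GenK.s)⁻¹ * (FreeGroup.of GenK.a * FreeGroup.of GenK.b)⁻¹)
    (Set.mem_insert _ _)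
  rw [map_mul, map_mul, map_inv, map_inv, map_mul] at h
  have h' : Sk * Ak * Sk⁻¹ * (Ak * Bk)⁻¹ = 1 := h
  have := mul_eq_one_iff_eq_inv.mp h'
  rw [inv_inv] at this
  calc Sk * Ak = (Sk * Ak * Sk⁻¹) * Sk := by group
    _ = (Ak * Bk) * Sk := by rw [this]

lemma rel2 : Sk * Bk = Bk * Sk := by
  have h := mk_rel_one (r := FreeGroup.of GenK.s * FreeGroup.of GenK.b *
      (FreeGroup.of GenK.s)⁻¹ * (FreeGroup.of GenK.b)⁻¹)
    (Set.mem_insert_iff.mpr (Or.inr rfl))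
  rw [map_mul, map_mul, map_inv, map_inv] at h
  have h' : Sk * Bk * Sk⁻¹ * Bk⁻¹ = 1 := h
  have := mul_eq_one_iff_eq_inv.mp h'
  rw [inv_inv] at this
  calc Sk * Bk = (Sk * Bk * Sk⁻¹) * Sk := by group
    _ = Bk * Sk := by rw [this]

lemma commBS : Commute Bk Sk := (rel2).symm

def fK : GenK → Ghat
  | GenK.a => t
  | GenK.b => of bb
  | GenK.s => of ss

lemma hrels : ∀ r ∈ relsK, FreeGroup.lift fK r = 1 := by
  intro r hr
  rcases Set.mem_insert_iff.mp hr with rfl | hr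
  · simp only [map_mul, map_inv, FreeGroup.lift_apply_of]
    show of ss * t * (of ss)⁻¹ * (t * of bb)⁻¹ = 1
    have h1 : (t * of bb * of ss : Ghat) = of ss * t := by
      rw [mul_assoc, ← map_mul, show (bb * ss : Z2) = bb * ss from rfl, ← τ, t_mul_τ, σ]
    rw [show (t * of bb : Ghat)⁻¹ = (of ss * t * (of ss)⁻¹)⁻¹ from ?_]
    · group
    · rw [← h1]; group
  · rw [Set.mem_singleton_iff] at hr
    subst hr
    simp only [map_mul, map_inv, FreeGroup.lift_apply_of]
    show of ss * of bb * (of ss)⁻¹ * (of bb)⁻¹ = 1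
    rw [comm_of]
    group

def toHNN : K →* Ghat := PresentedGroup.toGroup hrels

@[simp] lemma toHNN_Ak : toHNN Ak = t := PresentedGroup.toGroup.of hrels
@[simp] lemma toHNN_Bk : toHNN Bk = of bb := PresentedGroup.toGroup.of hrels
@[simp] lemma toHNN_Sk : toHNN Sk = of ss := PresentedGroup.toGroup.of hrels

def fb : Z2 →* K where
  toFun g := Bk ^ (toAdd g).1 * Sk ^ (toAdd g).2
  map_one' := by simp
  map_mul' g₁ g₂ := by
    have hc : Commute (Sk ^ (toAdd g₁).2) (Bk ^ (toAdd g₂).1) :=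
      (commBS.symm).zpow_zpow _ _
    show Bk ^ (toAdd g₁ + toAdd g₂).1 * Sk ^ (toAdd g₁ + toAdd g₂).2 = _
    rw [Prod.fst_add, Prod.snd_add, zpow_add, zpow_add]
    calc Bk ^ (toAdd g₁).1 * Bk ^ (toAdd g₂).1 * (Sk ^ (toAdd g₁).2 * Sk ^ (toAdd g₂).2)
        = Bk ^ (toAdd g₁).1 * (Bk ^ (toAdd g₂).1 * Sk ^ (toAdd g₁).2) * Sk ^ (toAdd g₂).2 := by
          group
      _ = Bk ^ (toAdd g₁).1 * (Sk ^ (toAdd g₁).2 * Bk ^ (toAdd g₂).1) * Sk ^ (toAdd g₂).2 := by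
          rw [hc.eq]
      _ = Bk ^ (toAdd g₁).1 * Sk ^ (toAdd g₁).2 * (Bk ^ (toAdd g₂).1 * Sk ^ (toAdd g₂).2) := by
          group

@[simp] lemma fb_bb : fb bb = Bk := by
  show Bk ^ (1 : ℤ) * Sk ^ (0 : ℤ) = Bk
  simp

@[simp] lemma fb_ss : fb ss = Sk := by
  show Bk ^ (0 : ℤ) * Sk ^ (1 : ℤ) = Sk
  simp

lemma fb_bs : fb (bb * ss) = Bk * Sk := by rw [map_mul, fb_bb, fb_ss]

lemma conjAk : Ak⁻¹ * Sk * Ak = Bk * Sk := by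
  calc Ak⁻¹ * Sk * Ak = Ak⁻¹ * (Sk * Ak) := by group
    _ = Ak⁻¹ * (Ak * Bk * Sk) := by rw [rel1]
    _ = Bk * Sk := by group

lemma hlift : ∀ a : SA, Ak * fb (a : Z2) = fb ((φAB a : SB) : Z2) * Ak := by
  intro a
  obtain ⟨k, hk⟩ := Subgroup.mem_zpowers_iff.mp a.2
  have hφ : ((φAB a : SB) : Z2) = pAB (a : Z2) := rfl
  rw [hφ, ← hk]
  simp only [map_zpow, pAB_bs, fb_bs, fb_ss]
  have hconj : Ak⁻¹ * Sk ^ k * Ak = (Bk * Sk) ^ k := by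
    have h := (conj_zpow (i := k) (a := Ak⁻¹) (b := Sk))
    rw [inv_inv] at h
    rw [← h, conjAk]
  calc Ak * (Bk * Sk) ^ k = Ak * (Ak⁻¹ * Sk ^ k * Ak) := by rw [hconj]
    _ = Sk ^ k * Ak := by group

def toK : Ghat →* K := HNNExtension.lift fb Ak hlift

@[simp] lemma toK_t : toK t = Ak := HNNExtension.lift_t _ _ _
@[simp] lemma toK_of (g : Z2) : toK (of g) = fb g := HNNExtension.lift_of _ _ _ _

lemma idK : toK.comp toHNN = MonoidHom.id K := by
  apply PresentedGroup.ext
  intro x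
  cases x
  case a => show toK (toHNN Ak) = Ak; rw [toHNN_Ak, toK_t]
  case b => show toK (toHNN Bk) = Bk; rw [toHNN_Bk, toK_of, fb_bb]
  case s => show toK (toHNN Sk) = Sk; rw [toHNN_Sk, toK_of, fb_ss]

lemma idG : toHNN.comp toK = MonoidHom.id Ghat := by
  apply HNNExtension.hom_ext
  · apply MonoidHom.ext
    intro g
    simp only [MonoidHom.comp_apply, MonoidHom.id_apply]
    show toHNN (toK (of g)) = of g
    rw [toK_of]
    show toHNN (Bk ^ (toAdd g).1 * Sk ^ (toAdd g).2) = of g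
    rw [map_mul, map_zpow, map_zpow, toHNN_Bk, toHNN_Sk, ← map_zpow, ← map_zpow, ← map_mul,
      decompose_Z2]
  · show toHNN (toK t) = t
    simp

def eKG : K ≃* Ghat := MonoidHom.toMulEquiv toHNN toK idK idG

@[simp] lemma eKG_apply (x : K) : eKG x = toHNN x := rfl

end Iso

theorem main_transfer :
    Subgroup.centralizer {Sk} =
      Subgroup.closure {Ak * Bk * Ak⁻¹, Bk, Sk} := by
  have h1 : Subgroup.centralizer {Sk} =
      Subgroup.comap eKG.toMonoidHom (Subgroup.centralizer {σ}) := by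
    ext g
    rw [Subgroup.mem_comap, Subgroup.mem_centralizer_iff, Subgroup.mem_centralizer_iff]
    constructor
    · intro hg z hz
      rw [Set.mem_singleton_iff] at hz; subst hz
      have hgk := hg Sk (Set.mem_singleton _)
      have h := congrArg eKG hgk
      rw [map_mul, map_mul] at h
      simpa [σ] using h
    · intro hg z hz
      rw [Set.mem_singleton_iff] at hz; subst hz
      have hσ := hg σ (Set.mem_singleton _)
      apply eKG.injective
      rw [map_mul, map_mul]
      simpa [σ] using hσ
  have himg : (eKG.toMonoidHom '' {Ak * Bk * Ak⁻¹, Bk, Sk} : Set Ghat) = Hgen := by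
    rw [Set.image_insert_eq, Set.image_insert_eq, Set.image_singleton]
    have e1 : eKG.toMonoidHom (Ak * Bk * Ak⁻¹) = t * of bb * t⁻¹ := by
      show eKG (Ak * Bk * Ak⁻¹) = t * of bb * t⁻¹
      rw [map_mul, map_mul, map_inv]
      simp
    have e2 : eKG.toMonoidHom Bk = of bb := by simp
    have e3 : eKG.toMonoidHom Sk = of ss := by simp
    rw [e1, e2, e3, Hgen]
  have h2 : (H : Subgroup Ghat) =
      Subgroup.map eKG.toMonoidHom (Subgroup.closure {Ak * Bk * Ak⁻¹, Bk, Sk}) := by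
    rw [MonoidHom.map_closure, himg, H]
  rw [h1, centralizer_sigma, h2]
  exact Subgroup.comap_map_eq_self_of_injective (f := eKG.toMonoidHom) eKG.injective _

end KWork

/-- The centraliser of `s` in `K` is the subgroup generated by `{aba⁻¹, b, s}`. -/
theorem centralizer_s_in_K :
    Subgroup.centralizer {(PresentedGroup.of GenK.s : PresentedGroup relsK)} =
      Subgroup.closure
        {PresentedGroup.of GenK.a * PresentedGroup.of GenK.b *
            (PresentedGroup.of GenK.a)⁻¹,
          PresentedGroup.of GenK.b, PresentedGroup.of GenK.s} :=
  KWork.main_transfer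
end

section
/- Let A(P₃) = ⟨a, b, c | ab = ba, bc = cb⟩ and let e_a : A(P₃) → ℤ be the homomorphism determined by e_a(a) = 1, e_a(b) = 0, e_a(c) = 0. Then the subgroup of A(P₃) generated by {ab, c} equals the set {u · b^(e_a(u)) : u ∈ ⟨a, c⟩}, where ⟨a, c⟩ is the subgroup generated by a and c. -/
open scoped commutatorElement

/-- Generators of `A(P₃) = ⟨a, b, c | ab = ba, bc = cb⟩`. -/
inductive GenA
  | a | b | c

/-- Relators of `A(P₃) = ⟨a, b, c | ab = ba, bc = cb⟩`. -/
def relsA : Set (FreeGroup GenA) :=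
  { ⁅FreeGroup.of GenA.a, FreeGroup.of GenA.b⁆,
    ⁅FreeGroup.of GenA.b, FreeGroup.of GenA.c⁆ }

/-- The exponent-sum function on generators. -/
def eaf : GenA → Multiplicative ℤ
  | .a => Multiplicative.ofAdd 1
  | .b => 1
  | .c => 1

lemma eaf_rels : ∀ r ∈ relsA, FreeGroup.lift eaf r = 1 := by
  intro r hr
  rcases hr with rfl | rfl <;>
  · rw [map_commutatorElement]
    exact commutatorElement_eq_one_iff_commute.mpr (Commute.all _ _)

lemma rel_one {r : FreeGroup GenA} (hr : r ∈ relsA) :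
    PresentedGroup.mk relsA r = 1 := by
  have : r ∈ Subgroup.normalClosure relsA := Subgroup.subset_normalClosure hr
  exact (QuotientGroup.eq_one_iff r).mpr this

lemma b_central (g : PresentedGroup relsA) :
    Commute g (PresentedGroup.of GenA.b) := by
  have hab : Commute (PresentedGroup.of (rels := relsA) GenA.a) (PresentedGroup.of GenA.b) := by
    have := rel_one (show ⁅FreeGroup.of GenA.a, FreeGroup.of GenA.b⁆ ∈ relsA by left; rfl)
    rw [map_commutatorElement] at this
    exact commutatorElement_eq_one_iff_commute.mp this
  have hbc : Commute (PresentedGroup.of (rels := relsA) GenA.b) (PresentedGroup.of GenA.c) := by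
    have := rel_one (show ⁅FreeGroup.of GenA.b, FreeGroup.of GenA.c⁆ ∈ relsA by right; rfl)
    rw [map_commutatorElement] at this
    exact commutatorElement_eq_one_iff_commute.mp this
  have hg : g ∈ Subgroup.closure (Set.range (PresentedGroup.of : GenA → PresentedGroup relsA)) := by
    rw [PresentedGroup.closure_range_of]; trivial
  induction hg using Subgroup.closure_induction with
  | mem x hx =>
      obtain ⟨y, rfl⟩ := hx
      cases y with
      | a => exact hab
      | b => exact Commute.refl _
      | c => exact hbc.symm
  | one => exact Commute.one_left _
  | mul x y _ _ hx hy => exact hx.mul_left hy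
  | inv x _ hx => exact hx.inv_left

noncomputable def ea : PresentedGroup relsA →* Multiplicative ℤ :=
  PresentedGroup.toGroup eaf_rels

/-- The twisting homomorphism `u ↦ u * b ^ (e_a u)`. -/
noncomputable def psi : PresentedGroup relsA →* PresentedGroup relsA where
  toFun g := g * (PresentedGroup.of GenA.b) ^ (Multiplicative.toAdd (ea g))
  map_one' := by simp
  map_mul' g h := by
    have hc : Commute h ((PresentedGroup.of (rels := relsA) GenA.b) ^
        (Multiplicative.toAdd (ea g))) := (b_central h).zpow_right _
    rw [map_mul ea, toAdd_mul, zpow_add, mul_assoc g, ← mul_assoc h, hc.eq]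
    group

/-- There is an exponent-sum homomorphism `e_a : A(P₃) → ℤ` (written additively,
i.e. a homomorphism to `Multiplicative ℤ`) with `e_a(a) = 1`, `e_a(b) = e_a(c) = 0`,
and `⟨ab, c⟩ = {u · b^(e_a u) : u ∈ ⟨a, c⟩}`. -/
theorem closure_ab_c_eq :
    ∃ ea : PresentedGroup relsA →* Multiplicative ℤ,
      ea (PresentedGroup.of GenA.a) = Multiplicative.ofAdd 1 ∧
      ea (PresentedGroup.of GenA.b) = 1 ∧
      ea (PresentedGroup.of GenA.c) = 1 ∧
      (↑(Subgroup.closure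
          {PresentedGroup.of GenA.a * PresentedGroup.of GenA.b,
            PresentedGroup.of GenA.c} : Subgroup (PresentedGroup relsA)) :
          Set (PresentedGroup relsA)) =
        { w | ∃ u ∈ Subgroup.closure
              ({PresentedGroup.of GenA.a, PresentedGroup.of GenA.c} :
                Set (PresentedGroup relsA)),
            w = u * (PresentedGroup.of GenA.b) ^ (Multiplicative.toAdd (ea u)) } := by
  refine ⟨ea, PresentedGroup.toGroup.of eaf_rels, PresentedGroup.toGroup.of eaf_rels,
    PresentedGroup.toGroup.of eaf_rels, ?_⟩
  have ha : ea (PresentedGroup.of GenA.a) = Multiplicative.ofAdd 1 :=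
    PresentedGroup.toGroup.of eaf_rels
  have hc : ea (PresentedGroup.of GenA.c) = 1 := PresentedGroup.toGroup.of eaf_rels
  have hpa : psi (PresentedGroup.of GenA.a) =
      PresentedGroup.of GenA.a * PresentedGroup.of GenA.b := by
    have h0 : psi (PresentedGroup.of GenA.a) = PresentedGroup.of GenA.a *
        (PresentedGroup.of GenA.b) ^ (Multiplicative.toAdd (ea (PresentedGroup.of GenA.a))) := rfl
    rw [h0, ha]; simp
  have hpc : psi (PresentedGroup.of GenA.c) = PresentedGroup.of GenA.c := by
    have h0 : psi (PresentedGroup.of GenA.c) = PresentedGroup.of GenA.c *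
        (PresentedGroup.of GenA.b) ^ (Multiplicative.toAdd (ea (PresentedGroup.of GenA.c))) := rfl
    rw [h0, hc]; simp
  have key : Subgroup.closure
      {PresentedGroup.of (rels := relsA) GenA.a * PresentedGroup.of GenA.b,
        PresentedGroup.of GenA.c} =
      Subgroup.map psi (Subgroup.closure {PresentedGroup.of GenA.a, PresentedGroup.of GenA.c}) := by
    rw [MonoidHom.map_closure, Set.image_pair, hpa, hpc]
  rw [key]
  ext w
  simp only [Subgroup.coe_map, Set.mem_image, Set.mem_setOf_eq, SetLike.mem_coe]
  constructor
  · rintro ⟨u, hu, rfl⟩; exact ⟨u, hu, rfl⟩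
  · rintro ⟨u, hu, rfl⟩; exact ⟨u, hu, rfl⟩
end

section
/- Let G = ⟨c, q | c(qcq⁻¹) = (qcq⁻¹)c⟩, for each i ∈ ℤ set cᵢ = qⁱ c q⁻ⁱ, and let H = ⟨c₀, c₂, c₄c₅, c₆, c₈, c₉c₁₀⟩ be the subgroup of G generated by the six elements c₀, c₂, c₄c₅, c₆, c₈ and c₉c₁₀. Then H is isomorphic to the free group of rank 6. -/
/-- The subgroup `H = ⟨c₀, c₂, c₄c₅, c₆, c₈, c₉c₁₀⟩` of `G`. -/
def Hsub : Subgroup (PresentedGroup relsG) :=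
  Subgroup.closure
    {cElt 0, cElt 2, cElt 4 * cElt 5, cElt 6, cElt 8, cElt 9 * cElt 10}

/- ==================== auxiliary ==================== -/

noncomputable section BKS

abbrev FZ := FreeGroup ℤ

/-- shift automorphism of `FreeGroup ℤ`. -/
def tau : FZ ≃* FZ := FreeGroup.freeGroupCongr (Equiv.addRight (1 : ℤ))

/-- the automorphism `α (x, y) = (τ y, x)` of `FZ × FZ`. -/
def alph : (FZ × FZ) ≃* (FZ × FZ) :=
  (MulEquiv.prodComm).trans (tau.prodCongr (MulEquiv.refl FZ))

lemma alph_apply (x y : FZ) : alph (x, y) = (tau y, x) := rfl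

lemma tau_of (k : ℤ) : tau (FreeGroup.of k) = FreeGroup.of (k + 1) := by
  simp [tau]

/-- the acting homomorphism. -/
def phiK : Multiplicative ℤ →* MulAut (FZ × FZ) := zpowersHom _ alph

/-- the target group `K = (FZ × FZ) ⋊ ℤ`. -/
abbrev K := (FZ × FZ) ⋊[phiK] Multiplicative ℤ

open SemidirectProduct

def fgen : GenG → K
  | .c => inl (FreeGroup.of 0, 1)
  | .q => inr (Multiplicative.ofAdd 1)

lemma hrel : ∀ r ∈ relsG, FreeGroup.lift fgen r = 1 := by
  intro r hr
  have : r = FreeGroup.of GenG.c *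
      (FreeGroup.of GenG.q * FreeGroup.of GenG.c * (FreeGroup.of GenG.q)⁻¹) *
      ((FreeGroup.of GenG.q * FreeGroup.of GenG.c * (FreeGroup.of GenG.q)⁻¹) *
        FreeGroup.of GenG.c)⁻¹ := hr
  subst this
  have h1 : (inr (Multiplicative.ofAdd 1) : K) * inl (FreeGroup.of 0, 1) *
      (inr (Multiplicative.ofAdd 1))⁻¹ = inl (1, FreeGroup.of 0) := by
    rw [← map_inv inr, ← inl_aut]
    congr 1
  simp only [map_mul, map_inv, FreeGroup.lift_apply_of, fgen, h1]
  rw [mul_inv_rev]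
  have : (inl ((FreeGroup.of 0 : FZ), (1:FZ)) : K) * inl (1, FreeGroup.of 0)
      = inl (1, FreeGroup.of 0) * inl (FreeGroup.of 0, 1) := by
    rw [← map_mul, ← map_mul]
    congr 1
  rw [this]
  group

/-- the homomorphism `θ : G → K`. -/
def theta : PresentedGroup relsG →* K := PresentedGroup.toGroup hrel

lemma theta_c : theta (PresentedGroup.of GenG.c) = inl (FreeGroup.of 0, 1) :=
  PresentedGroup.toGroup.of hrel

lemma theta_q : theta (PresentedGroup.of GenG.q) = inr (Multiplicative.ofAdd 1) :=
  PresentedGroup.toGroup.of hrel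

lemma theta_cElt (i : ℤ) :
    theta (cElt i) = inl ((alph ^ i) (FreeGroup.of 0, 1)) := by
  have : theta (cElt i)
      = inr (Multiplicative.ofAdd 1) ^ i * inl (FreeGroup.of 0, 1) *
        (inr (Multiplicative.ofAdd 1) ^ i)⁻¹ := by
    simp [cElt, map_mul, map_zpow, theta_c, theta_q, zpow_neg]
  rw [this, ← map_zpow inr, ← map_inv inr, ← inl_aut]
  congr 1
  show (phiK (Multiplicative.ofAdd 1 ^ i)) _ = _
  have : phiK (Multiplicative.ofAdd 1 ^ i) = alph ^ i := by
    simp [phiK]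
  rw [this]

lemma alph_pow (n : ℕ) : (alph ^ n) ((FreeGroup.of 0 : FZ), (1 : FZ)) =
    if n % 2 = 0 then ((FreeGroup.of ((n / 2 : ℕ) : ℤ) : FZ), (1 : FZ))
    else ((1 : FZ), (FreeGroup.of ((n / 2 : ℕ) : ℤ) : FZ)) := by
  induction n with
  | zero => simp
  | succ n ih =>
    rw [pow_succ']
    have : (alph * alph ^ n) ((FreeGroup.of 0 : FZ), (1 : FZ))
        = alph ((alph ^ n) ((FreeGroup.of 0 : FZ), (1 : FZ))) := rfl
    rw [this, ih]
    rcases Nat.even_or_odd n with he | ho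
    · have h0 : n % 2 = 0 := Nat.even_iff.mp he
      have h1 : (n + 1) % 2 = 1 := by omega
      have h2 : (n + 1) / 2 = n / 2 := by omega
      simp [h0, h1, h2, alph_apply]
    · have h0 : n % 2 = 1 := Nat.odd_iff.mp ho
      have h1 : (n + 1) % 2 = 0 := by omega
      have h2 : (n + 1) / 2 = n / 2 + 1 := by omega
      simp [h0, h1, h2, alph_apply, tau_of]

lemma theta_cElt_nat (n : ℕ) : theta (cElt n) =
    inl (if n % 2 = 0 then ((FreeGroup.of ((n / 2 : ℕ) : ℤ) : FZ), (1 : FZ))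
      else ((1 : FZ), (FreeGroup.of ((n / 2 : ℕ) : ℤ) : FZ))) := by
  rw [theta_cElt, ← alph_pow, zpow_natCast]

def gvec : Fin 6 → PresentedGroup relsG :=
  ![cElt 0, cElt 2, cElt 4 * cElt 5, cElt 6, cElt 8, cElt 9 * cElt 10]

def vvec : Fin 6 → (FZ × FZ) :=
  ![(FreeGroup.of 0, 1), (FreeGroup.of 1, 1), (FreeGroup.of 2, FreeGroup.of 2),
    (FreeGroup.of 3, 1), (FreeGroup.of 4, 1), (FreeGroup.of 5, FreeGroup.of 4)]

def sHom : FreeGroup (Fin 6) →* PresentedGroup relsG := FreeGroup.lift gvec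

def rhoHom : FreeGroup (Fin 6) →* (FZ × FZ) := FreeGroup.lift vvec

lemma comp_eq : theta.comp sHom = (inl : (FZ × FZ) →* K).comp rhoHom := by
  have e0 := theta_cElt_nat 0
  have e2 := theta_cElt_nat 2
  have e4 := theta_cElt_nat 4
  have e5 := theta_cElt_nat 5
  have e6 := theta_cElt_nat 6
  have e8 := theta_cElt_nat 8
  have e9 := theta_cElt_nat 9
  have e10 := theta_cElt_nat 10
  norm_num at e0 e2 e4 e5 e6 e8 e9 e10
  apply FreeGroup.ext_hom
  intro a
  fin_cases a <;>
    simp only [MonoidHom.comp_apply, sHom, rhoHom, FreeGroup.lift_apply_of]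
  · exact e0
  · show theta (cElt 2) = inl (FreeGroup.of 1, 1)
    exact e2
  · show theta (cElt 4 * cElt 5) = inl (FreeGroup.of 2, FreeGroup.of 2)
    rw [map_mul, e4, e5, ← map_mul]
    have : ((FreeGroup.of 2 : FZ), (1 : FZ)) * ((1 : FZ), (FreeGroup.of 2 : FZ))
        = ((FreeGroup.of 2 : FZ), (FreeGroup.of 2 : FZ)) := by
      simp [Prod.ext_iff]
    rw [this]
  · show theta (cElt 6) = inl (FreeGroup.of 3, 1)
    exact e6
  · show theta (cElt 8) = inl (FreeGroup.of 4, 1)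
    exact e8
  · show theta (cElt 9 * cElt 10) = inl (FreeGroup.of 5, FreeGroup.of 4)
    rw [map_mul, e9, e10, ← map_mul]
    have : ((1 : FZ), (FreeGroup.of 4 : FZ)) * ((FreeGroup.of 5 : FZ), (1 : FZ))
        = ((FreeGroup.of 5 : FZ), (FreeGroup.of 4 : FZ)) := by
      simp [Prod.ext_iff]
    rw [this]

def iot : Fin 6 → ℤ := fun i => (i : ℤ)

def retr : ℤ → Fin 6 := fun n => if h : 0 ≤ n ∧ n < 6 then ⟨n.toNat, by omega⟩ else 0

lemma map_iot_inj : Function.Injective (FreeGroup.map iot : FreeGroup (Fin 6) →* FZ) := by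
  have hcomp : (FreeGroup.map retr).comp (FreeGroup.map iot)
      = MonoidHom.id (FreeGroup (Fin 6)) := by
    apply FreeGroup.ext_hom
    intro a
    simp only [MonoidHom.comp_apply, FreeGroup.map.of, MonoidHom.id_apply]
    congr 1
    fin_cases a <;> rfl
  intro x y h
  have := congrArg (FreeGroup.map retr) h
  rwa [← MonoidHom.comp_apply, ← MonoidHom.comp_apply, hcomp, MonoidHom.id_apply,
    MonoidHom.id_apply] at this

lemma fst_rho : (MonoidHom.fst FZ FZ).comp rhoHom = FreeGroup.map iot := by
  apply FreeGroup.ext_hom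
  intro a
  fin_cases a <;>
    simp only [MonoidHom.comp_apply, rhoHom, FreeGroup.lift_apply_of, FreeGroup.map.of] <;> rfl

lemma rho_inj : Function.Injective rhoHom := by
  have : Function.Injective (⇑(MonoidHom.fst FZ FZ) ∘ ⇑rhoHom) := by
    have h : ⇑(MonoidHom.fst FZ FZ) ∘ ⇑rhoHom = ⇑((MonoidHom.fst FZ FZ).comp rhoHom) := rfl
    rw [h, fst_rho]
    exact map_iot_inj
  exact this.of_comp

lemma s_inj : Function.Injective sHom := by
  have : Function.Injective (⇑theta ∘ ⇑sHom) := by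
    have h : ⇑theta ∘ ⇑sHom = ⇑(theta.comp sHom) := rfl
    rw [h, comp_eq]
    exact inl_injective.comp rho_inj
  exact this.of_comp

lemma s_range : sHom.range = Hsub := by
  rw [sHom, FreeGroup.range_lift_eq_closure, Hsub]
  congr 1
  ext x
  simp [gvec, Matrix.range_cons, Matrix.range_empty]
  tauto

end BKS

/-- `H = ⟨c₀, c₂, c₄c₅, c₆, c₈, c₉c₁₀⟩` is isomorphic to the free group of rank 6. -/
theorem Hsub_free_of_rank_six :
    Nonempty (Hsub ≃* FreeGroup (Fin 6)) := by
  exact ⟨(MulEquiv.subgroupCongr s_range.symm).trans (MonoidHom.ofInjective s_inj).symm⟩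
end
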